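/- arXiv:2311.07181 — 2 statements merged into one kernel-verified Lean document; each statement's English description precedes it below -/
import Mathlib

section
/- For all n ≥ 2, the number L_n of lonely singles partitions of [n] satisfies L_n ≥ Σ_{m=1}^{⌊n/2⌋} (1/(n−m+1))·C(n,m)·C(n−m−1,m−1) + Σ_{m=2}^{⌊(n+1)/2⌋} C(n,m−1)·C(n−m−1,m−2). -/
/-- `π` is a partition of `[n] = {1,…,n}`: blocks are nonempty, pairwise disjoint,
and their union is exactly `{1,…,n}`. -/
def IsPartitionOf (n : ℕ) (π : Finset (Finset ℕ)) : Prop :=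
  (∀ A ∈ π, A.Nonempty) ∧
  (∀ A ∈ π, ∀ B ∈ π, A ≠ B → Disjoint A B) ∧
  (∀ x : ℕ, x ∈ Finset.Icc 1 n ↔ ∃ A ∈ π, x ∈ A)

/-- `π` is crossing: two distinct blocks contain `a < c < b < d` with `a,b` in one and
`c,d` in the other. -/
def Crossing (π : Finset (Finset ℕ)) : Prop :=
  ∃ A ∈ π, ∃ B ∈ π, A ≠ B ∧ ∃ a ∈ A, ∃ b ∈ A, ∃ c ∈ B, ∃ d ∈ B,
    a < c ∧ c < b ∧ b < d

/-- Noncrossing partition of `[n]`. -/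
def IsNCPartition (n : ℕ) (π : Finset (Finset ℕ)) : Prop :=
  IsPartitionOf n π ∧ ¬ Crossing π

/-- Replace the singleton blocks `{i}` and `{j}` by the block `{i,j}`. -/
def mergeSingles (π : Finset (Finset ℕ)) (i j : ℕ) : Finset (Finset ℕ) :=
  insert {i, j} ((π.erase {i}).erase {j})

/-- A marriageable singles partition of `[n]`. -/
def IsMarriageable (n : ℕ) (π : Finset (Finset ℕ)) : Prop :=
  IsNCPartition n π ∧ ∃ i j : ℕ, i ≠ j ∧ {i} ∈ π ∧ {j} ∈ π ∧
    IsNCPartition n (mergeSingles π i j)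

/-- A lonely singles partition of `[n]`. -/
def IsLonely (n : ℕ) (π : Finset (Finset ℕ)) : Prop :=
  IsNCPartition n π ∧ ¬ IsMarriageable n π

/-- `C n`: the number of noncrossing partitions of `[n]`. -/
noncomputable def Cnum (n : ℕ) : ℕ := Set.ncard {π : Finset (Finset ℕ) | IsNCPartition n π}

/-- `M n`: the number of marriageable singles partitions of `[n]`. -/
noncomputable def Mnum (n : ℕ) : ℕ := Set.ncard {π : Finset (Finset ℕ) | IsMarriageable n π}

/-- `L n`: the number of lonely singles partitions of `[n]`. -/
noncomputable def Lnum (n : ℕ) : ℕ := Set.ncard {π : Finset (Finset ℕ) | IsLonely n π}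

/-- `NCcount n m k`: number of noncrossing partitions of `[n]` into `m` blocks with
exactly `k` singleton blocks. -/
noncomputable def NCcount (n m k : ℕ) : ℕ :=
  Set.ncard {π : Finset (Finset ℕ) | IsNCPartition n π ∧ π.card = m ∧
    (π.filter fun A => A.card = 1).card = k}

/-- Binomial coefficient on integers, `0` when an argument is negative. -/
def zchoose (a b : ℤ) : ℤ := if 0 ≤ a ∧ 0 ≤ b then (a.toNat).choose b.toNat else 0

namespace NCP
open Finset

/-- Matching predicate: closer `j` is matched to opener `i`. -/
def Match (P : ℕ → ℤ) (i j : ℕ) : Prop :=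
  1 ≤ i ∧ i < j ∧ P (i-1) ≤ P j ∧ ∀ u ∈ Finset.Ico i j, P j < P u

instance (P : ℕ → ℤ) (i j : ℕ) : Decidable (Match P i j) := by
  unfold Match; infer_instance

/-- The block of opener `i`. -/
def blk (ℓ : ℕ) (P : ℕ → ℤ) (i : ℕ) : Finset ℕ :=
  (Finset.Icc 1 ℓ).filter (fun j => j = i ∨ Match P i j)

/-- The noncrossing partition associated to a good path. -/
def part (ℓ : ℕ) (P : ℕ → ℤ) : Finset (Finset ℕ) :=
  ((Finset.Icc 1 ℓ).filter (fun i => P (i-1) < P i)).image (blk ℓ P)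

/-- A good Łukasiewicz-type path. -/
structure GoodW (ℓ : ℕ) (P : ℕ → ℤ) : Prop where
  zero : P 0 = 0
  last : P ℓ = 0
  nonneg : ∀ t, t ≤ ℓ → 0 ≤ P t
  step : ∀ t, 1 ≤ t → t ≤ ℓ → P t = P (t-1) - 1 ∨ P (t-1) + 1 ≤ P t

variable {ℓ : ℕ} {P : ℕ → ℤ}

lemma Match.opener {i j : ℕ} (h : Match P i j) : P (i-1) < P i := by
  obtain ⟨h1, h2, h3, h4⟩ := h
  exact lt_of_le_of_lt h3 (h4 i (by simp [h2]))

lemma Match.closer (G : GoodW ℓ P) {i j : ℕ} (h : Match P i j) (hj : j ≤ ℓ) :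
    P j = P (j-1) - 1 := by
  obtain ⟨h1, h2, h3, h4⟩ := h
  have hu : P j < P (j-1) := h4 (j-1) (by
    simp only [Finset.mem_Ico]
    omega)
  rcases G.step j (by omega) hj with h | h
  · exact h
  · omega

lemma match_unique {i i' j : ℕ} (h : Match P i j) (h' : Match P i' j) : i = i' := by
  obtain ⟨ha1, ha2, ha3, ha4⟩ := h
  obtain ⟨hb1, hb2, hb3, hb4⟩ := h'
  by_contra hne
  rcases Nat.lt_or_ge i i' with hlt | hge
  · have := ha4 (i'-1) (by simp only [Finset.mem_Ico]; omega)
    omega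
  · have hlt : i' < i := by omega
    have := hb4 (i-1) (by simp only [Finset.mem_Ico]; omega)
    omega

lemma match_exists (G : GoodW ℓ P) {j : ℕ} (h1 : 1 ≤ j) (h2 : j ≤ ℓ)
    (hc : P j < P (j-1)) : ∃ i, Match P i j := by
  classical
  set F := (Finset.Icc 1 j).filter (fun i => P (i-1) ≤ P j) with hF
  have h1F : 1 ∈ F := by
    simp only [hF, Finset.mem_filter, Finset.mem_Icc]
    refine ⟨⟨le_refl _, h1⟩, ?_⟩
    simpa [G.zero] using G.nonneg j h2
  obtain ⟨i, hiF, hmax⟩ := Finset.exists_max_image F id ⟨1, h1F⟩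
  simp only [hF, Finset.mem_filter, Finset.mem_Icc] at hiF
  have hij : i ≠ j := by
    rintro rfl
    exact absurd hiF.2 (by omega)
  refine ⟨i, hiF.1.1, by omega, hiF.2, ?_⟩
  intro u hu
  simp only [Finset.mem_Ico] at hu
  by_contra hle
  push_neg at hle
  have hu1 : u + 1 ∈ F := by
    simp only [hF, Finset.mem_filter, Finset.mem_Icc]
    constructor
    · omega
    · simpa using hle
  have := hmax _ hu1
  simp only [id] at this
  omega

lemma level_exists (G : GoodW ℓ P) {i : ℕ} (hi1 : 1 ≤ i) (hi2 : i ≤ ℓ) {v : ℤ}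
    (hv1 : P (i-1) ≤ v) (hv2 : v < P i) :
    ∃ j, j ≤ ℓ ∧ Match P i j ∧ P j = v := by
  classical
  have hv0 : 0 ≤ v := le_trans (G.nonneg (i-1) (by omega)) hv1
  have hiℓ : i < ℓ := by
    rcases Nat.lt_or_ge i ℓ with h | h
    · exact h
    · exfalso
      have : i = ℓ := by omega
      rw [this, G.last] at hv2
      omega
  set F := (Finset.Ioc i ℓ).filter (fun j => P j ≤ v) with hF
  have hℓF : ℓ ∈ F := by
    simp only [hF, Finset.mem_filter, Finset.mem_Ioc]
    exact ⟨⟨hiℓ, le_refl _⟩, by rw [G.last]; exact hv0⟩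
  have hne : F.Nonempty := ⟨ℓ, hℓF⟩
  set j := F.min' hne with hj
  have hjF : j ∈ F := F.min'_mem hne
  simp only [hF, Finset.mem_filter, Finset.mem_Ioc] at hjF
  have hmid : ∀ u, i < u → u < j → v < P u := by
    intro u h1 h2
    by_contra hle
    push_neg at hle
    have huF : u ∈ F := by
      simp only [hF, Finset.mem_filter, Finset.mem_Ioc]
      exact ⟨⟨h1, by omega⟩, hle⟩
    have := F.min'_le _ huF
    omega
  have hjm1 : v < P (j-1) := by
    rcases Nat.lt_or_ge i (j-1) with h | h
    · exact hmid _ h (by omega)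
    · have : j - 1 = i := by omega
      rw [this]; exact hv2
  have hstep := G.step j (by omega) hjF.1.2
  have hPj : P j = v := by
    rcases hstep with h | h
    · omega
    · omega
  refine ⟨j, hjF.1.2, ⟨hi1, hjF.1.1, by omega, ?_⟩, hPj⟩
  intro u hu
  simp only [Finset.mem_Ico] at hu
  rw [hPj]
  rcases Nat.eq_or_lt_of_le hu.1 with h | h
  · rw [← h]; exact hv2
  · exact hmid u h hu.2

lemma level_inj {i j1 j2 : ℕ} (h1 : Match P i j1) (h2 : Match P i j2)
    (he : P j1 = P j2) : j1 = j2 := by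
  by_contra hne
  rcases Nat.lt_or_ge j1 j2 with h | h
  · have := h2.2.2.2 j1 (by simp only [Finset.mem_Ico]; exact ⟨le_of_lt h1.2.1, h⟩)
    omega
  · have hlt : j2 < j1 := by omega
    have := h1.2.2.2 j2 (by simp only [Finset.mem_Ico]; exact ⟨le_of_lt h2.2.1, hlt⟩)
    omega

lemma mem_blk_iff {i j : ℕ} : j ∈ blk ℓ P i ↔ (j ∈ Finset.Icc 1 ℓ ∧ (j = i ∨ Match P i j)) := by
  simp [blk]

lemma card_blk (G : GoodW ℓ P) {i : ℕ} (hi1 : 1 ≤ i) (hi2 : i ≤ ℓ)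
    (hop : P (i-1) < P i) : ((blk ℓ P i).card : ℤ) = P i - P (i-1) + 1 := by
  classical
  have hsplit : blk ℓ P i = insert i ((Finset.Icc 1 ℓ).filter (fun j => Match P i j)) := by
    ext j
    simp only [mem_blk_iff, Finset.mem_insert, Finset.mem_filter]
    constructor
    · rintro ⟨hj, h | h⟩
      · exact Or.inl h
      · exact Or.inr ⟨hj, h⟩
    · rintro (rfl | ⟨hj, h⟩)
      · exact ⟨Finset.mem_Icc.mpr ⟨hi1, hi2⟩, Or.inl rfl⟩
      · exact ⟨hj, Or.inr h⟩
  have hni : i ∉ (Finset.Icc 1 ℓ).filter (fun j => Match P i j) := by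
    simp only [Finset.mem_filter]
    rintro ⟨-, h⟩
    exact absurd h.2.1 (lt_irrefl i)
  rw [hsplit, Finset.card_insert_of_notMem hni]
  have hcard : ((Finset.Icc 1 ℓ).filter (fun j => Match P i j)).card
      = (Finset.Ico (P (i-1)) (P i)).card := by
    apply Finset.card_nbij (fun j => P j)
    · intro j hj
      simp only [Finset.mem_coe, Finset.mem_filter] at hj
      simp only [Finset.mem_coe, Finset.mem_Ico]
      exact ⟨hj.2.2.2.1, hj.2.2.2.2 i (by simp only [Finset.mem_Ico]; exact ⟨le_refl _, hj.2.2.1⟩)⟩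
    · intro j1 hj1 j2 hj2 he
      simp only [Finset.coe_filter, Set.mem_setOf_eq] at hj1 hj2
      exact level_inj hj1.2 hj2.2 he
    · intro v hv
      simp only [Finset.coe_Ico, Set.mem_Ico] at hv
      obtain ⟨j, hjℓ, hm, hPj⟩ := level_exists G hi1 hi2 hv.1 hv.2
      refine ⟨j, ?_, hPj⟩
      simp only [Finset.coe_filter, Set.mem_setOf_eq, Finset.mem_Icc]
      exact ⟨⟨by have := hm.2.1; omega, hjℓ⟩, hm⟩
  rw [hcard]
  rw [Int.card_Ico]
  push_cast [Int.toNat_of_nonneg (by omega : (0:ℤ) ≤ P i - P (i-1))]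
  ring

end NCP

namespace NCP
open Finset
variable {ℓ : ℕ} {P : ℕ → ℤ}

lemma mem_blk_self {i : ℕ} (hi1 : 1 ≤ i) (hi2 : i ≤ ℓ) : i ∈ blk ℓ P i :=
  mem_blk_iff.mpr ⟨Finset.mem_Icc.mpr ⟨hi1, hi2⟩, Or.inl rfl⟩

lemma le_of_mem_blk {i j : ℕ} (h : j ∈ blk ℓ P i) : i ≤ j := by
  rcases (mem_blk_iff.mp h).2 with rfl | hm
  · exact le_refl _
  · exact le_of_lt hm.2.1

lemma mem_part_iff {A : Finset ℕ} :
    A ∈ part ℓ P ↔ ∃ i, (1 ≤ i ∧ i ≤ ℓ ∧ P (i-1) < P i) ∧ A = blk ℓ P i := by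
  simp only [part, Finset.mem_image, Finset.mem_filter, Finset.mem_Icc]
  constructor
  · rintro ⟨i, ⟨⟨h1, h2⟩, h3⟩, rfl⟩
    exact ⟨i, ⟨h1, h2, h3⟩, rfl⟩
  · rintro ⟨i, ⟨h1, h2, h3⟩, rfl⟩
    exact ⟨i, ⟨⟨h1, h2⟩, h3⟩, rfl⟩

lemma blk_mem_part {i : ℕ} (h1 : 1 ≤ i) (h2 : i ≤ ℓ) (h3 : P (i-1) < P i) :
    blk ℓ P i ∈ part ℓ P := mem_part_iff.mpr ⟨i, ⟨h1, h2, h3⟩, rfl⟩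

/-- The unique block containing a given element. -/
lemma block_eq_of_mem (G : GoodW ℓ P) {A : Finset ℕ} {j : ℕ}
    (hA : A ∈ part ℓ P) (hj : j ∈ A) :
    (P (j-1) < P j → A = blk ℓ P j) ∧ (∀ i, Match P i j → A = blk ℓ P i) := by
  obtain ⟨i0, ⟨h1, h2, h3⟩, rfl⟩ := mem_part_iff.mp hA
  have hjIcc := (mem_blk_iff.mp hj).1
  simp only [Finset.mem_Icc] at hjIcc
  rcases (mem_blk_iff.mp hj).2 with rfl | hm
  · constructor
    · intro _; rfl
    · intro i hi
      have := Match.closer G hi hjIcc.2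
      omega
  · have hcl := Match.closer G hm hjIcc.2
    constructor
    · intro h; omega
    · intro i hi
      rw [match_unique hi hm]

lemma part_disjoint (G : GoodW ℓ P) {A B : Finset ℕ} (hA : A ∈ part ℓ P)
    (hB : B ∈ part ℓ P) (hAB : A ≠ B) : Disjoint A B := by
  rw [Finset.disjoint_left]
  intro j hjA hjB
  apply hAB
  obtain ⟨i0, hi0, hAeq⟩ := mem_part_iff.mp hA
  have hjIcc : j ∈ Finset.Icc 1 ℓ := (mem_blk_iff.mp (by rw [hAeq] at hjA; exact hjA)).1
  simp only [Finset.mem_Icc] at hjIcc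
  rcases G.step j hjIcc.1 hjIcc.2 with h | h
  · obtain ⟨i, hi⟩ := match_exists G hjIcc.1 hjIcc.2 (by omega)
    rw [(block_eq_of_mem G hA hjA).2 i hi, (block_eq_of_mem G hB hjB).2 i hi]
  · rw [(block_eq_of_mem G hA hjA).1 (by omega), (block_eq_of_mem G hB hjB).1 (by omega)]

lemma part_isPartition (G : GoodW ℓ P) : IsPartitionOf ℓ (part ℓ P) := by
  refine ⟨?_, fun A hA B hB => part_disjoint G hA hB, ?_⟩
  · intro A hA
    obtain ⟨i, ⟨h1, h2, _⟩, rfl⟩ := mem_part_iff.mp hA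
    exact ⟨i, mem_blk_self h1 h2⟩
  · intro x
    constructor
    · intro hx
      simp only [Finset.mem_Icc] at hx
      rcases G.step x (by omega) (by omega) with h | h
      · obtain ⟨i, hi⟩ := match_exists G hx.1 hx.2 (by omega)
        refine ⟨blk ℓ P i, blk_mem_part hi.1 (by have := hi.2.1; omega) (Match.opener hi), ?_⟩
        simp only [mem_blk_iff, Finset.mem_Icc]
        exact ⟨⟨hx.1, hx.2⟩, Or.inr hi⟩
      · exact ⟨blk ℓ P x, blk_mem_part (by omega) (by omega) (by omega),
          mem_blk_self (by omega) (by omega)⟩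
    · rintro ⟨A, hA, hxA⟩
      obtain ⟨i, _, rfl⟩ := mem_part_iff.mp hA
      exact (mem_blk_iff.mp hxA).1

lemma part_card_two_le (G : GoodW ℓ P) {A : Finset ℕ} (hA : A ∈ part ℓ P) :
    2 ≤ A.card := by
  obtain ⟨i, ⟨h1, h2, h3⟩, rfl⟩ := mem_part_iff.mp hA
  have := card_blk G h1 h2 h3
  omega

lemma part_noncrossing (G : GoodW ℓ P) : ¬ Crossing (part ℓ P) := by
  rintro ⟨A, hA, B, hB, hAB, a, ha, b, hb, c, hc, d, hd, hac, hcb, hbd⟩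
  obtain ⟨i1, ⟨hi11, hi12, hi13⟩, rfl⟩ := mem_part_iff.mp hA
  obtain ⟨i2, ⟨hi21, hi22, hi23⟩, rfl⟩ := mem_part_iff.mp hB
  have hi12ne : i1 ≠ i2 := fun h => hAB (by rw [h])
  have ha1 : i1 ≤ a := le_of_mem_blk ha
  have hc2 : i2 ≤ c := le_of_mem_blk hc
  have hMb : Match P i1 b := by
    rcases (mem_blk_iff.mp hb).2 with rfl | hm
    · omega
    · exact hm
  have hMd : Match P i2 d := by
    rcases (mem_blk_iff.mp hd).2 with rfl | hm
    · omega
    · exact hm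
  have hPbd : P d < P b := hMd.2.2.2 b (by simp only [Finset.mem_Ico]; omega)
  rcases Nat.lt_or_ge i1 i2 with hlt | hge
  · have h1 : P b < P (i2 - 1) := hMb.2.2.2 (i2-1) (by simp only [Finset.mem_Ico]; omega)
    have h2 : P (i2 - 1) ≤ P d := hMd.2.2.1
    omega
  · have hlt : i2 < i1 := by omega
    have hMc : Match P i2 c := by
      rcases (mem_blk_iff.mp hc).2 with rfl | hm
      · omega
      · exact hm
    have h1 : P c < P (i1 - 1) := hMc.2.2.2 (i1-1) (by
      simp only [Finset.mem_Ico]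
      have := hMc.1
      omega)
    have h2 : P (i1 - 1) ≤ P b := hMb.2.2.1
    have h3 : P b < P c := hMb.2.2.2 c (by simp only [Finset.mem_Ico]; omega)
    omega

/-- Recover the step at position `j` from the partition. -/
def stepOf (π : Finset (Finset ℕ)) (j : ℕ) : ℤ :=
  let A := (π.filter (fun B => j ∈ B)).biUnion id
  if h : A.Nonempty then (if A.min' h = j then (A.card : ℤ) - 1 else -1) else -1

lemma filter_part_opener (G : GoodW ℓ P) {j : ℕ} (hj1 : 1 ≤ j) (hj2 : j ≤ ℓ)
    (hop : P (j-1) < P j) :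
    (part ℓ P).filter (fun B => j ∈ B) = {blk ℓ P j} := by
  ext B
  simp only [Finset.mem_filter, Finset.mem_singleton]
  constructor
  · rintro ⟨hB, hjB⟩
    exact (block_eq_of_mem G hB hjB).1 hop
  · rintro rfl
    exact ⟨blk_mem_part hj1 hj2 hop, mem_blk_self hj1 hj2⟩

lemma filter_part_closer (G : GoodW ℓ P) {i j : ℕ} (hj2 : j ≤ ℓ) (hm : Match P i j) :
    (part ℓ P).filter (fun B => j ∈ B) = {blk ℓ P i} := by
  have hjblk : j ∈ blk ℓ P i := by
    simp only [mem_blk_iff, Finset.mem_Icc]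
    have := hm.1
    have := hm.2.1
    exact ⟨⟨by omega, hj2⟩, Or.inr hm⟩
  ext B
  simp only [Finset.mem_filter, Finset.mem_singleton]
  constructor
  · rintro ⟨hB, hjB⟩
    exact (block_eq_of_mem G hB hjB).2 i hm
  · rintro rfl
    refine ⟨blk_mem_part hm.1 (by have := hm.2.1; omega) (Match.opener hm), hjblk⟩

lemma stepOf_part (G : GoodW ℓ P) {j : ℕ} (hj1 : 1 ≤ j) (hj2 : j ≤ ℓ) :
    stepOf (part ℓ P) j = P j - P (j-1) := by
  rcases G.step j hj1 hj2 with h | h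
  · -- closer
    obtain ⟨i, hi⟩ := match_exists G hj1 hj2 (by omega)
    unfold stepOf
    rw [filter_part_closer G hj2 hi, Finset.singleton_biUnion]
    simp only [id]
    have hne : (blk ℓ P i).Nonempty := ⟨i, mem_blk_self hi.1 (by have := hi.2.1; omega)⟩
    rw [dif_pos hne]
    have hmin : (blk ℓ P i).min' hne ≠ j := by
      have h1 : (blk ℓ P i).min' hne ≤ i := Finset.min'_le _ _ (mem_blk_self hi.1 (by have := hi.2.1; omega))
      have := hi.2.1
      omega
    rw [if_neg hmin]
    omega
  · -- opener
    unfold stepOf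
    rw [filter_part_opener G hj1 hj2 (by omega), Finset.singleton_biUnion]
    simp only [id]
    have hne : (blk ℓ P j).Nonempty := ⟨j, mem_blk_self hj1 hj2⟩
    rw [dif_pos hne]
    have hmin : (blk ℓ P j).min' hne = j := by
      refine le_antisymm (Finset.min'_le _ _ (mem_blk_self hj1 hj2)) ?_
      apply Finset.le_min'
      intro y hy
      exact le_of_mem_blk hy
    rw [if_pos hmin]
    have := card_blk G hj1 hj2 (by omega)
    omega

end NCP

namespace NCP
open Finset

/-- A walk with total sum `-1` and steps in `{-1} ∪ [1,∞)`. -/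
structure Walk (N : ℕ) (W : ℕ → ℤ) : Prop where
  zero : W 0 = 0
  last : W N = -1
  step : ∀ t, 1 ≤ t → t ≤ N → W t = W (t-1) - 1 ∨ W (t-1) + 1 ≤ W t

/-- First position achieving the minimum of `W` on `[0, N]`. -/
def argminW (N : ℕ) (W : ℕ → ℤ) : ℕ :=
  ((Finset.range (N+1)).filter
    (fun j => W j = (((Finset.range (N+1)).image W).min).untopD 0)).min.untopD 0

/-- The rotated path. -/
def rotP (N : ℕ) (W : ℕ → ℤ) (k : ℕ) : ℕ → ℤ :=
  fun t => if k + t ≤ N then W (k+t) - W k else W (t - (N - k)) - 1 - W k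

section rotation

variable {N : ℕ} {W : ℕ → ℤ}

lemma argminW_spec (hN : 1 ≤ N) (hW : Walk N W) :
    argminW N W ≤ N ∧ (∀ u ≤ N, W (argminW N W) ≤ W u) ∧
      (∀ j < argminW N W, W (argminW N W) < W j) := by
  classical
  have hVne : ((Finset.range (N+1)).image W).Nonempty :=
    ⟨W 0, Finset.mem_image_of_mem W (by simp)⟩
  set mv := (((Finset.range (N+1)).image W).min).untopD 0 with hmv
  have hmv' : mv = ((Finset.range (N+1)).image W).min' hVne := by
    rw [hmv, ← Finset.coe_min' hVne, WithTop.untopD_coe]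
  have hmv_le : ∀ u ≤ N, mv ≤ W u := by
    intro u hu
    rw [hmv']
    exact Finset.min'_le _ _ (Finset.mem_image_of_mem W (by simp only [Finset.mem_range]; omega))
  set F := (Finset.range (N+1)).filter (fun j => W j = mv) with hF
  have hFne : F.Nonempty := by
    have : mv ∈ (Finset.range (N+1)).image W := by rw [hmv']; exact Finset.min'_mem _ _
    obtain ⟨j, hj, hWj⟩ := Finset.mem_image.mp this
    exact ⟨j, by simp only [hF, Finset.mem_filter]; exact ⟨hj, hWj⟩⟩
  have hk : argminW N W = F.min' hFne := by
    unfold argminW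
    rw [← hmv, ← hF, ← Finset.coe_min' hFne, WithTop.untopD_coe]
  have hkF : argminW N W ∈ F := by rw [hk]; exact F.min'_mem hFne
  simp only [hF, Finset.mem_filter, Finset.mem_range] at hkF
  refine ⟨by omega, fun u hu => by rw [hkF.2]; exact hmv_le u hu, ?_⟩
  intro j hj
  rw [hkF.2]
  rcases eq_or_lt_of_le (hmv_le j (by omega)) with h | h
  · exfalso
    have hjF : j ∈ F := by
      simp only [hF, Finset.mem_filter, Finset.mem_range]
      exact ⟨by omega, h.symm⟩
    have := F.min'_le j hjF
    omega
  · exact h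

lemma argminW_pos (hN : 1 ≤ N) (hW : Walk N W) : 1 ≤ argminW N W := by
  obtain ⟨h1, h2, h3⟩ := argminW_spec hN hW
  rcases Nat.eq_zero_or_pos (argminW N W) with h | h
  · have := h2 N (le_refl _)
    rw [h, hW.zero, hW.last] at this
    omega
  · exact h

lemma argminW_stepdown (hN : 1 ≤ N) (hW : Walk N W) :
    W (argminW N W) = W (argminW N W - 1) - 1 := by
  obtain ⟨h1, h2, h3⟩ := argminW_spec hN hW
  have hk1 := argminW_pos hN hW
  have hlt : W (argminW N W) < W (argminW N W - 1) := h3 _ (by omega)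
  rcases hW.step (argminW N W) hk1 h1 with h | h
  · exact h
  · omega

/-- The index in the original walk corresponding to position `t` of the rotation. -/
def rotIdx (N k t : ℕ) : ℕ := if k + t ≤ N then k + t else t - (N - k)

lemma rotP_step (hN : 1 ≤ N) (hW : Walk N W)
    {t : ℕ} (ht1 : 1 ≤ t) (ht2 : t ≤ N - 1) :
    rotP N W (argminW N W) t - rotP N W (argminW N W) (t-1)
      = W (rotIdx N (argminW N W) t) - W (rotIdx N (argminW N W) t - 1)
    ∧ 1 ≤ rotIdx N (argminW N W) t ∧ rotIdx N (argminW N W) t ≤ N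
    ∧ rotIdx N (argminW N W) t ≠ argminW N W := by
  set k := argminW N W with hk
  have hk1 := argminW_pos hN hW
  have hkN := (argminW_spec hN hW).1
  rw [← hk] at hk1 hkN
  unfold rotP rotIdx
  rcases Nat.lt_or_ge (k + t) (N + 1) with h | h
  · -- k + t ≤ N
    have h1 : k + t ≤ N := by omega
    have h2 : k + (t-1) ≤ N := by omega
    rw [if_pos h1, if_pos h2, if_pos h1]
    have : k + t - 1 = k + (t - 1) := by omega
    constructor
    · rw [this]; ring
    · omega
  · rcases Nat.eq_or_lt_of_le h with h' | h'
    · -- boundary : k + t = N + 1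
      have h1 : ¬ (k + t ≤ N) := by omega
      have h2 : k + (t-1) ≤ N := by omega
      have h3 : k + (t - 1) = N := by omega
      have h4 : t - (N - k) = 1 := by omega
      rw [if_neg h1, if_pos h2, if_neg h1, h3, h4, hW.last, hW.zero]
      constructor
      · simp
      · omega
    · -- both in wrapped part
      have h1 : ¬ (k + t ≤ N) := by omega
      have h2 : ¬ (k + (t-1) ≤ N) := by omega
      rw [if_neg h1, if_neg h2, if_neg h1]
      have h3 : t - 1 - (N - k) = t - (N - k) - 1 := by omega
      constructor
      · rw [h3]; ring
      · omega

lemma rotP_good (hN : 1 ≤ N) (hW : Walk N W) :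
    GoodW (N-1) (rotP N W (argminW N W)) := by
  set k := argminW N W with hk
  have hk1 := argminW_pos hN hW
  obtain ⟨hkN, hmin, hfirst⟩ := argminW_spec hN hW
  rw [← hk] at hk1 hkN hmin hfirst
  constructor
  · unfold rotP
    rw [if_pos (by omega : k + 0 ≤ N)]
    simp
  · unfold rotP
    rcases Nat.lt_or_ge (k + (N-1)) N with h | h
    · -- k = 0 impossible since k ≥ 1; k + (N-1) < N → k < 1
      exfalso; omega
    · rcases Nat.eq_or_lt_of_le h with h' | h'
      · -- k = 1
        rw [if_pos (by omega : k + (N - 1) ≤ N)]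
        have hkk : k = 1 := by omega
        have h1N : k + (N - 1) = N := by omega
        rw [h1N, hW.last]
        have hsd := argminW_stepdown hN hW
        rw [← hk, hkk] at hsd
        norm_num at hsd
        rw [hW.zero] at hsd
        rw [hkk]
        omega
      · rw [if_neg (by omega)]
        have heq : N - 1 - (N - k) = k - 1 := by omega
        rw [heq]
        have hsd := argminW_stepdown hN hW
        rw [← hk] at hsd
        omega
  · intro t ht
    unfold rotP
    rcases Nat.lt_or_ge (k + t) (N+1) with h | h
    · rw [if_pos (by omega)]
      have := hmin (k + t) (by omega)
      omega
    · rw [if_neg (by omega)]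
      have h1 : 1 ≤ t - (N - k) := by omega
      have h2 : t - (N - k) ≤ k - 1 := by omega
      have := hfirst (t - (N - k)) (by omega)
      omega
  · intro t ht1 ht2
    obtain ⟨hstep, hi1, hi2, hine⟩ := rotP_step hN hW ht1 ht2
    rw [← hk] at hstep hi1 hi2
    rcases hW.step _ hi1 hi2 with h | h
    · left; omega
    · right; omega

/-- Recovery of the original walk's steps from the rotated path. -/
lemma rot_recover (hN : 1 ≤ N) (hW : Walk N W) {i : ℕ} (hi1 : 1 ≤ i) (hi2 : i ≤ N) :
    W i - W (i-1) =
      if i = argminW N W then -1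
      else if argminW N W < i
        then rotP N W (argminW N W) (i - argminW N W)
              - rotP N W (argminW N W) (i - argminW N W - 1)
        else rotP N W (argminW N W) (i + (N - argminW N W))
              - rotP N W (argminW N W) (i + (N - argminW N W) - 1) := by
  set k := argminW N W with hk
  have hk1 := argminW_pos hN hW
  have hkN := (argminW_spec hN hW).1
  rw [← hk] at hk1 hkN
  rcases eq_or_ne i k with rfl | hne
  · rw [if_pos rfl]
    have := argminW_stepdown hN hW
    rw [← hk] at this
    omega
  rw [if_neg hne]
  rcases Nat.lt_or_ge k i with h | h
  · rw [if_pos h]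
    have ht1 : 1 ≤ i - k := by omega
    have ht2 : i - k ≤ N - 1 := by omega
    obtain ⟨hstep, -, -, -⟩ := rotP_step hN hW ht1 ht2
    rw [← hk] at hstep
    rw [hstep]
    have : rotIdx N k (i - k) = i := by unfold rotIdx; rw [if_pos (by omega)]; omega
    rw [this]
  · have hik : i < k := by omega
    rw [if_neg (by omega)]
    have ht1 : 1 ≤ i + (N - k) := by omega
    have ht2 : i + (N - k) ≤ N - 1 := by omega
    obtain ⟨hstep, -, -, -⟩ := rotP_step hN hW ht1 ht2
    rw [← hk] at hstep
    rw [hstep]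
    have : rotIdx N k (i + (N - k)) = i := by unfold rotIdx; rw [if_neg (by omega)]; omega
    rw [this]

end rotation
end NCP

namespace NCP
open Finset

/-- Number of elements of `S` that are `≤ i`. -/
def rnk (S : Finset ℕ) (i : ℕ) : ℕ := (S.filter (· ≤ i)).card

/-- `r`-th partial sum of the composition encoded by `T` (with total `D`). -/
def tfun (T : Finset ℕ) (D r : ℕ) : ℕ :=
  if r = 0 then 0 else (T.sort (· ≤ ·)).getD (r-1) D

/-- The walk encoded by up-step positions `S` and composition data `T`. -/
def encP (N : ℕ) (S T : Finset ℕ) : ℕ → ℤ :=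
  fun i => (tfun T (N - S.card - 1) (rnk S i) : ℤ) + (rnk S i : ℤ) - (i : ℤ)

section encoding

variable {N m D : ℕ} {S T : Finset ℕ}

lemma rnk_zero (hS : S ⊆ Finset.Icc 1 N) : rnk S 0 = 0 := by
  unfold rnk
  rw [Finset.card_eq_zero]
  ext x
  simp only [Finset.mem_filter, Finset.notMem_empty, iff_false, not_and]
  intro hx
  have := hS hx
  simp only [Finset.mem_Icc] at this
  omega

lemma rnk_last (hS : S ⊆ Finset.Icc 1 N) : rnk S N = S.card := by
  unfold rnk
  congr 1
  apply Finset.filter_true_of_mem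
  intro x hx
  have := hS hx
  simp only [Finset.mem_Icc] at this
  omega

lemma rnk_le : rnk S i ≤ S.card := Finset.card_le_card (Finset.filter_subset _ _)

lemma rnk_pos (hi : i ∈ S) : 1 ≤ rnk S i :=
  Finset.card_pos.mpr ⟨i, Finset.mem_filter.mpr ⟨hi, le_refl _⟩⟩

lemma rnk_step {i : ℕ} (hi : 1 ≤ i) :
    rnk S i = rnk S (i-1) + (if i ∈ S then 1 else 0) := by
  unfold rnk
  by_cases h : i ∈ S
  · rw [if_pos h]
    have : S.filter (· ≤ i) = insert i (S.filter (· ≤ i - 1)) := by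
      ext x
      simp only [Finset.mem_filter, Finset.mem_insert]
      constructor
      · rintro ⟨hx, hxi⟩
        rcases eq_or_ne x i with rfl | hne
        · exact Or.inl rfl
        · exact Or.inr ⟨hx, by omega⟩
      · rintro (rfl | ⟨hx, hxi⟩)
        · exact ⟨h, le_refl _⟩
        · exact ⟨hx, by omega⟩
    rw [this, Finset.card_insert_of_notMem (by
      simp only [Finset.mem_filter, not_and]
      intro _
      omega)]
  · rw [if_neg h]
    have : S.filter (· ≤ i) = S.filter (· ≤ i - 1) := by
      ext x
      simp only [Finset.mem_filter]
      constructor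
      · rintro ⟨hx, hxi⟩
        refine ⟨hx, ?_⟩
        rcases eq_or_ne x i with rfl | hne
        · exact absurd hx h
        · omega
      · rintro ⟨hx, hxi⟩
        exact ⟨hx, by omega⟩
    rw [this]
    omega

lemma rnk_lt_of_mem {i j : ℕ} (hj : j ∈ S) (hij : i < j) : rnk S i < rnk S j := by
  apply Finset.card_lt_card
  constructor
  · intro x hx
    simp only [Finset.mem_filter] at hx ⊢
    exact ⟨hx.1, by omega⟩
  · intro hsub
    have := hsub (Finset.mem_filter.mpr ⟨hj, le_refl j⟩)
    simp only [Finset.mem_filter] at this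
    omega

lemma tfun_top {r : ℕ} (hr : T.card < r) : tfun T D r = D := by
  unfold tfun
  rw [if_neg (by omega)]
  apply List.getD_eq_default
  rw [Finset.length_sort]
  omega

lemma tfun_mem {r : ℕ} (hr1 : 1 ≤ r) (hr2 : r ≤ T.card) : tfun T D r ∈ T := by
  unfold tfun
  rw [if_neg (by omega)]
  have hlen : r - 1 < (T.sort (· ≤ ·)).length := by rw [Finset.length_sort]; omega
  rw [List.getD_eq_getElem _ _ hlen]
  exact (Finset.mem_sort _).mp (List.getElem_mem hlen)

lemma tfun_strict (hT : T ⊆ Finset.Icc 1 (D-1)) (hTc : T.card = m - 1)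
    (hm1 : 1 ≤ m) (hD1 : 1 ≤ D) {r r' : ℕ} (hrr : r < r') (hr'm : r' ≤ m) :
    tfun T D r < tfun T D r' := by
  have hpos : 1 ≤ tfun T D r' := by
    rcases Nat.lt_or_ge T.card r' with h | h
    · rw [tfun_top h]; omega
    · have := hT (tfun_mem (D := D) (by omega) h)
      simp only [Finset.mem_Icc] at this
      omega
  rcases Nat.eq_zero_or_pos r with rfl | hr1
  · exact lt_of_lt_of_le (by simp [tfun]) hpos
  rcases Nat.lt_or_ge T.card r' with h | h
  · -- r' = m, tfun r' = D
    rw [tfun_top h]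
    have hrT : r ≤ T.card := by omega
    have := hT (tfun_mem (D := D) hr1 hrT)
    simp only [Finset.mem_Icc] at this
    omega
  · -- both within the list
    unfold tfun
    rw [if_neg (by omega), if_neg (by omega)]
    have hlen' : r' - 1 < (T.sort (· ≤ ·)).length := by rw [Finset.length_sort]; omega
    have hlen : r - 1 < (T.sort (· ≤ ·)).length := by omega
    rw [List.getD_eq_getElem _ _ hlen, List.getD_eq_getElem _ _ hlen']
    have hs := List.sortedLT_iff_pairwise.mp (Finset.sortedLT_sort T)
    exact List.Pairwise.rel_get_of_lt hs (by simp only [Fin.mk_lt_mk]; omega)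

variable (hS : S ⊆ Finset.Icc 1 N) (hSc : S.card = m) (hT : T ⊆ Finset.Icc 1 (D-1))
  (hTc : T.card = m - 1) (hN : N = m + D + 1) (hm1 : 1 ≤ m) (hD1 : 1 ≤ D)

include hS hSc hN in
lemma encP_D : N - S.card - 1 = D := by omega

include hS hSc hN in
lemma encP_zero : encP N S T 0 = 0 := by
  unfold encP
  rw [rnk_zero hS]
  simp [tfun]

include hS hSc hN hm1 hTc in
lemma encP_last : encP N S T N = -1 := by
  unfold encP
  rw [rnk_last hS, encP_D hS hSc hN, hSc, tfun_top (by omega)]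
  push_cast
  omega

include hS hSc hT hTc hN hm1 hD1 in
lemma encP_step {i : ℕ} (hi1 : 1 ≤ i) :
    (i ∈ S → encP N S T (i-1) + 1 ≤ encP N S T i) ∧
    (i ∉ S → encP N S T i = encP N S T (i-1) - 1) := by
  unfold encP
  rw [encP_D hS hSc hN]
  constructor
  · intro hiS
    have hstep := rnk_step (S := S) hi1
    rw [if_pos hiS] at hstep
    have hr1 : 1 ≤ rnk S i := rnk_pos hiS
    have hrm : rnk S i ≤ m := hSc ▸ rnk_le
    have hst : tfun T D (rnk S (i-1)) < tfun T D (rnk S i) := by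
      apply tfun_strict hT hTc hm1 hD1 _ hrm
      omega
    push_cast
    omega
  · intro hiS
    have hstep := rnk_step (S := S) hi1
    rw [if_neg hiS, Nat.add_zero] at hstep
    rw [hstep]
    push_cast
    omega

include hS hSc hT hTc hN hm1 hD1 in
lemma encP_walk : Walk N (encP N S T) := by
  refine ⟨encP_zero hS hSc hN, encP_last hS hSc hTc hN hm1, ?_⟩
  intro t ht1 ht2
  obtain ⟨h1, h2⟩ := encP_step hS hSc hT hTc hN hm1 hD1 ht1
  by_cases h : t ∈ S
  · exact Or.inr (h1 h)
  · exact Or.inl (h2 h)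

include hS hSc hN in
lemma encP_upsum (i : ℕ) :
    encP N S T i + (i : ℤ) - (rnk S i : ℤ) = (tfun T D (rnk S i) : ℤ) := by
  unfold encP
  rw [encP_D hS hSc hN]
  ring

include hS hSc in
lemma rnk_surj {r : ℕ} (hr1 : 1 ≤ r) (hrm : r ≤ m) : ∃ i ∈ S, rnk S i = r := by
  classical
  have hsurj := Finset.surj_on_of_inj_on_of_card_le (s := S) (t := Finset.Icc 1 m)
    (fun a _ => rnk S a)
    (fun a ha => Finset.mem_Icc.mpr ⟨rnk_pos ha, hSc ▸ rnk_le⟩)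
    (fun a1 a2 ha1 ha2 he => by
      by_contra hne
      rcases Nat.lt_or_ge a1 a2 with h | h
      · have := rnk_lt_of_mem ha2 h; omega
      · have := rnk_lt_of_mem ha1 (by omega : a2 < a1); omega)
    (by rw [Nat.card_Icc]; omega)
  obtain ⟨i, hi, hri⟩ := hsurj r (Finset.mem_Icc.mpr ⟨hr1, hrm⟩)
  exact ⟨i, hi, hri.symm⟩

include hS hSc hT hTc hN hm1 hD1 in
lemma T_char :
    T = (Finset.Icc 1 (D-1)).filter (fun v => ∃ i ∈ S, tfun T D (rnk S i) = v) := by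
  classical
  ext v
  simp only [Finset.mem_filter]
  constructor
  · intro hv
    refine ⟨hT hv, ?_⟩
    have hvl : v ∈ T.sort (· ≤ ·) := (Finset.mem_sort _).mpr hv
    obtain ⟨idx, hidx, hget⟩ := List.getElem_of_mem hvl
    have hr : tfun T D (idx + 1) = v := by
      unfold tfun
      rw [if_neg (by omega)]
      rw [List.getD_eq_getElem _ _ (by simpa using hidx)]
      simpa using hget
    have hidx' : idx + 1 ≤ m - 1 := by
      rw [Finset.length_sort, hTc] at hidx
      omega
    obtain ⟨i, hiS, hri⟩ := rnk_surj hS hSc (by omega : 1 ≤ idx + 1) (by omega)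
    exact ⟨i, hiS, by rw [hri, hr]⟩
  · rintro ⟨hvI, i, hiS, hv⟩
    simp only [Finset.mem_Icc] at hvI
    have hr1 : 1 ≤ rnk S i := rnk_pos hiS
    have hrm : rnk S i ≤ m := hSc ▸ rnk_le
    rcases Nat.lt_or_ge T.card (rnk S i) with h | h
    · rw [tfun_top h] at hv
      omega
    · rw [← hv]
      exact tfun_mem hr1 h

end encoding
end NCP

namespace NCP
open Finset

/-- Reconstructed full-walk steps from a partition and a rotation index. -/
def sdec (N : ℕ) (π : Finset (Finset ℕ)) (k : ℕ) : ℕ → ℤ :=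
  fun i => if i = k then -1 else if k < i then stepOf π (i - k) else stepOf π (i + (N - k))

/-- Reconstructed walk. -/
def Pdec (N : ℕ) (π : Finset (Finset ℕ)) (k : ℕ) : ℕ → ℤ :=
  fun i => ∑ j ∈ Finset.Icc 1 i, sdec N π k j

/-- Reconstructed up-step set. -/
def Sdec (N : ℕ) (π : Finset (Finset ℕ)) (k : ℕ) : Finset ℕ :=
  (Finset.Icc 1 N).filter (fun i => 0 < sdec N π k i)

/-- Reconstructed composition data. -/
def Tdec (N : ℕ) (π : Finset (Finset ℕ)) (k : ℕ) : Finset ℕ :=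
  (Finset.Icc 1 (N - (Sdec N π k).card - 2)).filter
    (fun v => ∃ i ∈ Sdec N π k,
      Pdec N π k i + (i:ℤ) - (rnk (Sdec N π k) i : ℤ) = (v:ℤ))

section decode

variable {N m D : ℕ} {S T : Finset ℕ}
variable (hS : S ⊆ Finset.Icc 1 N) (hSc : S.card = m) (hT : T ⊆ Finset.Icc 1 (D-1))
  (hTc : T.card = m - 1) (hN : N = m + D + 1) (hm1 : 1 ≤ m) (hD1 : 1 ≤ D)

include hS hSc hT hTc hN hm1 hD1

lemma decode_good :
    GoodW (N-1) (rotP N (encP N S T) (argminW N (encP N S T))) :=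
  rotP_good (by omega) (encP_walk hS hSc hT hTc hN hm1 hD1)

lemma decode_k :
    1 ≤ argminW N (encP N S T) ∧ argminW N (encP N S T) ≤ N :=
  ⟨argminW_pos (by omega) (encP_walk hS hSc hT hTc hN hm1 hD1),
   (argminW_spec (by omega) (encP_walk hS hSc hT hTc hN hm1 hD1)).1⟩

lemma decode_sdec {i : ℕ} (hi1 : 1 ≤ i) (hi2 : i ≤ N) :
    sdec N (part (N-1) (rotP N (encP N S T) (argminW N (encP N S T))))
        (argminW N (encP N S T)) i
      = encP N S T i - encP N S T (i-1) := by
  set W := encP N S T with hW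
  set k := argminW N W with hk
  set Q := rotP N W k with hQ
  have hWalk : Walk N W := encP_walk hS hSc hT hTc hN hm1 hD1
  have hG : GoodW (N-1) Q := decode_good hS hSc hT hTc hN hm1 hD1
  have hk1 : 1 ≤ k := argminW_pos (by omega) hWalk
  have hkN : k ≤ N := (argminW_spec (by omega) hWalk).1
  have hrec := rot_recover (by omega : 1 ≤ N) hWalk hi1 hi2
  rw [← hk, ← hQ] at hrec
  unfold sdec
  rcases eq_or_ne i k with rfl | hne
  · rw [if_pos rfl] at hrec ⊢
    omega
  rw [if_neg hne] at hrec ⊢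
  rcases Nat.lt_or_ge k i with h | h
  · rw [if_pos h] at hrec ⊢
    have ht1 : 1 ≤ i - k := by omega
    have ht2 : i - k ≤ N - 1 := by omega
    rw [stepOf_part hG ht1 ht2]
    omega
  · have h' : i < k := by omega
    rw [if_neg (by omega)] at hrec ⊢
    have ht1 : 1 ≤ i + (N - k) := by omega
    have ht2 : i + (N - k) ≤ N - 1 := by omega
    rw [stepOf_part hG ht1 ht2]
    omega

lemma decode_S :
    Sdec N (part (N-1) (rotP N (encP N S T) (argminW N (encP N S T))))
        (argminW N (encP N S T)) = S := by
  ext i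
  unfold Sdec
  simp only [Finset.mem_filter, Finset.mem_Icc]
  constructor
  · rintro ⟨⟨hi1, hi2⟩, hpos⟩
    rw [decode_sdec hS hSc hT hTc hN hm1 hD1 hi1 hi2] at hpos
    by_contra hiS
    have := (encP_step hS hSc hT hTc hN hm1 hD1 hi1).2 hiS
    omega
  · intro hiS
    have hi := hS hiS
    simp only [Finset.mem_Icc] at hi
    refine ⟨hi, ?_⟩
    rw [decode_sdec hS hSc hT hTc hN hm1 hD1 hi.1 hi.2]
    have := (encP_step hS hSc hT hTc hN hm1 hD1 hi.1).1 hiS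
    omega

lemma decode_P {i : ℕ} (hi : i ≤ N) :
    Pdec N (part (N-1) (rotP N (encP N S T) (argminW N (encP N S T))))
        (argminW N (encP N S T)) i = encP N S T i := by
  induction i with
  | zero =>
    unfold Pdec
    rw [show Finset.Icc 1 0 = ∅ from rfl, Finset.sum_empty]
    exact (encP_zero hS hSc hN).symm
  | succ j ih =>
    have hj : j ≤ N := by omega
    have hsum : Pdec N (part (N-1) (rotP N (encP N S T) (argminW N (encP N S T))))
        (argminW N (encP N S T)) (j+1)
        = Pdec N (part (N-1) (rotP N (encP N S T) (argminW N (encP N S T))))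
            (argminW N (encP N S T)) j
          + sdec N (part (N-1) (rotP N (encP N S T) (argminW N (encP N S T))))
              (argminW N (encP N S T)) (j+1) := by
      unfold Pdec
      rw [← Finset.sum_Icc_succ_top (by omega : 1 ≤ j + 1)]
    rw [hsum, ih hj, decode_sdec hS hSc hT hTc hN hm1 hD1 (by omega) (by omega)]
    have : j + 1 - 1 = j := by omega
    rw [this]
    ring

lemma decode_T :
    Tdec N (part (N-1) (rotP N (encP N S T) (argminW N (encP N S T))))
        (argminW N (encP N S T)) = T := by
  unfold Tdec
  rw [decode_S hS hSc hT hTc hN hm1 hD1]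
  have hbound : N - S.card - 2 = D - 1 := by omega
  rw [hbound]
  have hcongr : (Finset.Icc 1 (D-1)).filter
      (fun v : ℕ => ∃ i ∈ S,
        Pdec N (part (N-1) (rotP N (encP N S T) (argminW N (encP N S T))))
          (argminW N (encP N S T)) i + (i:ℤ) - (rnk S i : ℤ) = (v:ℤ))
      = (Finset.Icc 1 (D-1)).filter (fun v : ℕ => ∃ i ∈ S, tfun T D (rnk S i) = v) := by
    apply Finset.filter_congr
    intro v hv
    constructor
    · rintro ⟨i, hiS, heq⟩
      refine ⟨i, hiS, ?_⟩
      have hi := hS hiS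
      simp only [Finset.mem_Icc] at hi
      rw [decode_P hS hSc hT hTc hN hm1 hD1 hi.2] at heq
      have := encP_upsum hS hSc hN (T := T) i
      have h2 : (tfun T D (rnk S i) : ℤ) = (v : ℤ) := by omega
      exact_mod_cast h2
    · rintro ⟨i, hiS, heq⟩
      refine ⟨i, hiS, ?_⟩
      have hi := hS hiS
      simp only [Finset.mem_Icc] at hi
      rw [decode_P hS hSc hT hTc hN hm1 hD1 hi.2]
      have := encP_upsum hS hSc hN (T := T) i
      have hv' : (tfun T D (rnk S i) : ℤ) = (v : ℤ) := by exact_mod_cast heq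
      omega
  rw [hcongr]
  exact (T_char hS hSc hT hTc hN hm1 hD1).symm

end decode
end NCP

namespace NCP
open Finset

def fi (i x : ℕ) : ℕ := if x < i then x else x + 1
def gi (i x : ℕ) : ℕ := if x < i then x else x - 1

lemma fi_strictMono (i : ℕ) : StrictMono (fi i) := by
  intro x y hxy
  unfold fi
  split_ifs <;> omega

lemma fi_inj (i : ℕ) : Function.Injective (fi i) := (fi_strictMono i).injective

lemma gi_fi (i x : ℕ) : gi i (fi i x) = x := by
  unfold fi gi
  split_ifs <;> omega

lemma fi_ne (i x : ℕ) : fi i x ≠ i := by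
  unfold fi
  split_ifs <;> omega

lemma fi_image_Icc {i n : ℕ} (hi1 : 1 ≤ i) (hi2 : i ≤ n) :
    (Finset.Icc 1 (n-1)).image (fi i) = (Finset.Icc 1 n).erase i := by
  ext x
  simp only [Finset.mem_image, Finset.mem_erase, Finset.mem_Icc]
  constructor
  · rintro ⟨y, hy, rfl⟩
    refine ⟨fi_ne i y, ?_⟩
    unfold fi
    split_ifs <;> omega
  · rintro ⟨hne, hx⟩
    rcases Nat.lt_or_ge x i with h | h
    · exact ⟨x, by omega, by unfold fi; rw [if_pos h]⟩
    · refine ⟨x - 1, by omega, ?_⟩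
      unfold fi
      rw [if_neg (by omega)]
      omega

/-- Inserting a fresh singleton and relabeling preserves partition-hood. -/
lemma insert_relabel_partition {n i : ℕ} {π₀ : Finset (Finset ℕ)}
    (hi1 : 1 ≤ i) (hi2 : i ≤ n) (hp : IsPartitionOf (n-1) π₀) :
    IsPartitionOf n (insert {i} (π₀.image (Finset.image (fi i)))) := by
  obtain ⟨hne, hdisj, hun⟩ := hp
  have hmem_notin : ∀ A₀ ∈ π₀, i ∉ A₀.image (fi i) := by
    intro A₀ hA₀ hmem
    obtain ⟨y, hy, hfy⟩ := Finset.mem_image.mp hmem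
    exact fi_ne i y hfy
  refine ⟨?_, ?_, ?_⟩
  · intro A hA
    rcases Finset.mem_insert.mp hA with rfl | hA
    · exact ⟨i, Finset.mem_singleton_self i⟩
    · obtain ⟨A₀, hA₀, rfl⟩ := Finset.mem_image.mp hA
      obtain ⟨x, hx⟩ := hne A₀ hA₀
      exact ⟨fi i x, Finset.mem_image_of_mem _ hx⟩
  · intro A hA B hB hAB
    rcases Finset.mem_insert.mp hA with rfl | hA <;>
      rcases Finset.mem_insert.mp hB with rfl | hB
    · exact absurd rfl hAB
    · obtain ⟨B₀, hB₀, rfl⟩ := Finset.mem_image.mp hB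
      rw [Finset.disjoint_left]
      intro x hx
      rw [Finset.mem_singleton] at hx
      subst hx
      exact hmem_notin B₀ hB₀
    · obtain ⟨A₀, hA₀, rfl⟩ := Finset.mem_image.mp hA
      rw [Finset.disjoint_right]
      intro x hx
      rw [Finset.mem_singleton] at hx
      subst hx
      exact hmem_notin A₀ hA₀
    · obtain ⟨A₀, hA₀, rfl⟩ := Finset.mem_image.mp hA
      obtain ⟨B₀, hB₀, rfl⟩ := Finset.mem_image.mp hB
      have hAB₀ : A₀ ≠ B₀ := fun h => hAB (by rw [h])
      exact Finset.disjoint_image (fi_inj i) |>.mpr (hdisj A₀ hA₀ B₀ hB₀ hAB₀)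
  · intro x
    constructor
    · intro hx
      rcases eq_or_ne x i with rfl | hne'
      · exact ⟨{x}, Finset.mem_insert_self _ _, Finset.mem_singleton_self x⟩
      · have : x ∈ (Finset.Icc 1 (n-1)).image (fi i) := by
          rw [fi_image_Icc hi1 hi2]
          exact Finset.mem_erase.mpr ⟨hne', hx⟩
        obtain ⟨y, hy, rfl⟩ := Finset.mem_image.mp this
        obtain ⟨A₀, hA₀, hyA₀⟩ := (hun y).mp hy
        exact ⟨A₀.image (fi i),
          Finset.mem_insert_of_mem (Finset.mem_image_of_mem _ hA₀),
          Finset.mem_image_of_mem _ hyA₀⟩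
    · rintro ⟨A, hA, hxA⟩
      rcases Finset.mem_insert.mp hA with rfl | hA
      · rw [Finset.mem_singleton] at hxA
        subst hxA
        simp only [Finset.mem_Icc]
        omega
      · obtain ⟨A₀, hA₀, rfl⟩ := Finset.mem_image.mp hA
        obtain ⟨y, hy, rfl⟩ := Finset.mem_image.mp hxA
        have hyIcc := (hun y).mpr ⟨A₀, hA₀, hy⟩
        have : fi i y ∈ (Finset.Icc 1 (n-1)).image (fi i) := Finset.mem_image_of_mem _ hyIcc
        rw [fi_image_Icc hi1 hi2] at this
        exact Finset.mem_of_mem_erase this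

lemma insert_relabel_noncrossing {i : ℕ} {π₀ : Finset (Finset ℕ)}
    (hnc : ¬ Crossing π₀) :
    ¬ Crossing (insert {i} (π₀.image (Finset.image (fi i)))) := by
  rintro ⟨A, hA, B, hB, hAB, a, ha, b, hb, c, hc, d, hd, h1, h2, h3⟩
  rcases Finset.mem_insert.mp hA with rfl | hA
  · rw [Finset.mem_singleton] at ha hb
    omega
  rcases Finset.mem_insert.mp hB with rfl | hB
  · rw [Finset.mem_singleton] at hc hd
    omega
  obtain ⟨A₀, hA₀, rfl⟩ := Finset.mem_image.mp hA
  obtain ⟨B₀, hB₀, rfl⟩ := Finset.mem_image.mp hB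
  obtain ⟨a₀, ha₀, rfl⟩ := Finset.mem_image.mp ha
  obtain ⟨b₀, hb₀, rfl⟩ := Finset.mem_image.mp hb
  obtain ⟨c₀, hc₀, rfl⟩ := Finset.mem_image.mp hc
  obtain ⟨d₀, hd₀, rfl⟩ := Finset.mem_image.mp hd
  apply hnc
  refine ⟨A₀, hA₀, B₀, hB₀, fun h => hAB (by rw [h]), a₀, ha₀, b₀, hb₀, c₀, hc₀, d₀, hd₀,
    ?_, ?_, ?_⟩ <;>
    [exact (fi_strictMono i).lt_iff_lt.mp h1; exact (fi_strictMono i).lt_iff_lt.mp h2;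
     exact (fi_strictMono i).lt_iff_lt.mp h3]

/-- A noncrossing partition with no two distinct singleton blocks is lonely. -/
lemma lonely_of_singletons {n : ℕ} {π : Finset (Finset ℕ)} (hnc : IsNCPartition n π)
    (h : ∀ x y : ℕ, {x} ∈ π → {y} ∈ π → x = y) : IsLonely n π := by
  refine ⟨hnc, ?_⟩
  rintro ⟨-, x, y, hxy, hx, hy, -⟩
  exact hxy (h x y hx hy)

end NCP

namespace NCP
open Finset

def pairsZ (n : ℕ) : Finset ((_ : ℕ) × (Finset ℕ × Finset ℕ)) :=
  (Finset.Icc 1 (n/2)).sigma (fun m =>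
    ((Finset.Icc 1 (n+1)).powersetCard m) ×ˢ ((Finset.Icc 1 (n-m-1)).powersetCard (m-1)))

def encodeZ (n : ℕ) (x : (_ : ℕ) × (Finset ℕ × Finset ℕ)) : Finset (Finset ℕ) :=
  part n (rotP (n+1) (encP (n+1) x.2.1 x.2.2) (argminW (n+1) (encP (n+1) x.2.1 x.2.2)))

def decodeZ (n : ℕ) (y : Finset (Finset ℕ) × ℕ) : (_ : ℕ) × (Finset ℕ × Finset ℕ) :=
  ⟨(Sdec (n+1) y.1 y.2).card, (Sdec (n+1) y.1 y.2, Tdec (n+1) y.1 y.2)⟩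

def pairsO (n : ℕ) : Finset ((_ : ℕ) × (ℕ × Finset ℕ × Finset ℕ)) :=
  (Finset.Icc 2 ((n+1)/2)).sigma (fun m =>
    (Finset.Icc 1 n) ×ˢ (((Finset.Icc 1 n).powersetCard (m-1)) ×ˢ
      ((Finset.Icc 1 (n-m-1)).powersetCard (m-2))))

def encodeO (n : ℕ) (x : (_ : ℕ) × (ℕ × Finset ℕ × Finset ℕ)) : Finset (Finset ℕ) :=
  insert {x.2.1}
    ((part (n-1) (rotP n (encP n x.2.2.1 x.2.2.2)
        (argminW n (encP n x.2.2.1 x.2.2.2)))).image (Finset.image (fi x.2.1)))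

def iOf (π : Finset (Finset ℕ)) : ℕ :=
  let A := (π.filter (fun A => A.card = 1)).biUnion id
  if h : A.Nonempty then A.min' h else 0

def decodeO (n : ℕ) (y : Finset (Finset ℕ) × ℕ) : (_ : ℕ) × (ℕ × Finset ℕ × Finset ℕ) :=
  ⟨(Sdec n ((y.1.erase {iOf y.1}).image (Finset.image (gi (iOf y.1)))) y.2).card + 1,
    (iOf y.1,
     Sdec n ((y.1.erase {iOf y.1}).image (Finset.image (gi (iOf y.1)))) y.2,
     Tdec n ((y.1.erase {iOf y.1}).image (Finset.image (gi (iOf y.1)))) y.2)⟩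

section Zside

variable {n : ℕ} (hn : 2 ≤ n)

lemma pairsZ_hyps {m : ℕ} {S T : Finset ℕ}
    (hx : (⟨m, (S, T)⟩ : (_ : ℕ) × (Finset ℕ × Finset ℕ)) ∈ pairsZ n) :
    S ⊆ Finset.Icc 1 (n+1) ∧ S.card = m ∧
    T ⊆ Finset.Icc 1 ((n - m) - 1) ∧ T.card = m - 1 ∧
    1 ≤ m ∧ m ≤ n / 2 := by
  simp only [pairsZ, Finset.mem_sigma, Finset.mem_product, Finset.mem_powersetCard,
    Finset.mem_Icc] at hx
  exact ⟨hx.2.1.1, hx.2.1.2, hx.2.2.1, hx.2.2.2, hx.1.1, hx.1.2⟩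

include hn in
lemma encodeZ_spec {m : ℕ} {S T : Finset ℕ}
    (hx : (⟨m, (S, T)⟩ : (_ : ℕ) × (Finset ℕ × Finset ℕ)) ∈ pairsZ n) :
    IsLonely n (encodeZ n ⟨m, (S, T)⟩) ∧ (∀ A ∈ encodeZ n ⟨m, (S, T)⟩, 2 ≤ A.card) ∧
    decodeZ n (encodeZ n ⟨m, (S, T)⟩, argminW (n+1) (encP (n+1) S T)) = ⟨m, (S, T)⟩ ∧
    argminW (n+1) (encP (n+1) S T) ∈ Finset.Icc 1 (n+1) := by
  obtain ⟨hS, hSc, hT, hTc, hm1, hm2⟩ := pairsZ_hyps hx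
  have hD1 : 1 ≤ n - m := by omega
  have hN : n + 1 = m + (n - m) + 1 := by omega
  have hG : GoodW n (rotP (n+1) (encP (n+1) S T) (argminW (n+1) (encP (n+1) S T))) := by
    have := decode_good hS hSc hT hTc hN hm1 hD1
    simpa using this
  have hEZ : encodeZ n ⟨m, (S, T)⟩
      = part n (rotP (n+1) (encP (n+1) S T) (argminW (n+1) (encP (n+1) S T))) := rfl
  have hpart : IsPartitionOf n (encodeZ n ⟨m, (S, T)⟩) := by
    rw [hEZ]; exact part_isPartition hG
  have hcard : ∀ A ∈ encodeZ n ⟨m, (S, T)⟩, 2 ≤ A.card := by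
    intro A hA
    rw [hEZ] at hA
    exact part_card_two_le hG hA
  have hnc : ¬ Crossing (encodeZ n ⟨m, (S, T)⟩) := by
    rw [hEZ]; exact part_noncrossing hG
  refine ⟨?_, hcard, ?_, ?_⟩
  · apply lonely_of_singletons ⟨hpart, hnc⟩
    intro a b ha hb
    have := hcard _ ha
    simp at this
  · have h1 := decode_S hS hSc hT hTc hN hm1 hD1
    have h2 := decode_T hS hSc hT hTc hN hm1 hD1
    simp only [Nat.add_sub_cancel] at h1 h2
    unfold decodeZ
    rw [hEZ]
    simp only
    rw [h1, h2, hSc]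
  · obtain ⟨hk1, hk2⟩ := decode_k hS hSc hT hTc hN hm1 hD1
    simp only [Finset.mem_Icc]
    exact ⟨hk1, hk2⟩

end Zside
end NCP

namespace NCP
open Finset

section Oside

variable {n : ℕ} (hn : 2 ≤ n)

lemma pairsO_hyps {m i : ℕ} {S T : Finset ℕ}
    (hx : (⟨m, (i, S, T)⟩ : (_ : ℕ) × (ℕ × Finset ℕ × Finset ℕ)) ∈ pairsO n) :
    1 ≤ i ∧ i ≤ n ∧ S ⊆ Finset.Icc 1 n ∧ S.card = m - 1 ∧
    T ⊆ Finset.Icc 1 ((n - m) - 1) ∧ T.card = m - 2 ∧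
    2 ≤ m ∧ 2 * m ≤ n + 1 := by
  simp only [pairsO, Finset.mem_sigma, Finset.mem_product, Finset.mem_powersetCard,
    Finset.mem_Icc] at hx
  refine ⟨hx.2.1.1, hx.2.1.2, hx.2.2.1.1, hx.2.2.1.2, hx.2.2.2.1, hx.2.2.2.2, hx.1.1, ?_⟩
  have := hx.1.2
  omega

include hn in
lemma encodeO_spec {m i : ℕ} {S T : Finset ℕ}
    (hx : (⟨m, (i, S, T)⟩ : (_ : ℕ) × (ℕ × Finset ℕ × Finset ℕ)) ∈ pairsO n) :
    IsLonely n (encodeO n ⟨m, (i, S, T)⟩) ∧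
    (∃ A ∈ encodeO n ⟨m, (i, S, T)⟩, A.card = 1) ∧
    decodeO n (encodeO n ⟨m, (i, S, T)⟩, argminW n (encP n S T)) = ⟨m, (i, S, T)⟩ ∧
    argminW n (encP n S T) ∈ Finset.Icc 1 n := by
  obtain ⟨hi1, hi2, hS, hSc, hT, hTc, hm2, hmn⟩ := pairsO_hyps hx
  have hm1 : 1 ≤ m - 1 := by omega
  have hD1 : 1 ≤ n - m := by omega
  have hN : n = (m - 1) + (n - m) + 1 := by omega
  have hTc' : T.card = (m - 1) - 1 := by omega
  have hG : GoodW (n-1) (rotP n (encP n S T) (argminW n (encP n S T))) :=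
    decode_good hS hSc hT hTc' hN hm1 hD1
  set k := argminW n (encP n S T) with hk
  set π₀ := part (n-1) (rotP n (encP n S T) k) with hπ₀
  have hEO : encodeO n ⟨m, (i, S, T)⟩ = insert {i} (π₀.image (Finset.image (fi i))) := rfl
  have hp₀ : IsPartitionOf (n-1) π₀ := part_isPartition hG
  have hpart : IsPartitionOf n (encodeO n ⟨m, (i, S, T)⟩) := by
    rw [hEO]; exact insert_relabel_partition hi1 hi2 hp₀
  have hnc : ¬ Crossing (encodeO n ⟨m, (i, S, T)⟩) := by
    rw [hEO]; exact insert_relabel_noncrossing (part_noncrossing hG)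
  have himg_card : ∀ A₀ ∈ π₀, (A₀.image (fi i)).card = A₀.card := by
    intro A₀ _
    exact Finset.card_image_of_injective _ (fi_inj i)
  have hsing : ∀ A ∈ encodeO n ⟨m, (i, S, T)⟩, A.card = 1 → A = {i} := by
    intro A hA hA1
    rw [hEO] at hA
    rcases Finset.mem_insert.mp hA with rfl | hA
    · rfl
    · obtain ⟨A₀, hA₀, rfl⟩ := Finset.mem_image.mp hA
      have := part_card_two_le hG hA₀
      rw [himg_card A₀ hA₀] at hA1
      omega
  have hisin : ({i} : Finset ℕ) ∈ encodeO n ⟨m, (i, S, T)⟩ := by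
    rw [hEO]; exact Finset.mem_insert_self _ _
  have hiOf : iOf (encodeO n ⟨m, (i, S, T)⟩) = i := by
    have hfilter : (encodeO n ⟨m, (i, S, T)⟩).filter (fun A => A.card = 1)
        = {({i} : Finset ℕ)} := by
      ext A
      simp only [Finset.mem_filter, Finset.mem_singleton]
      constructor
      · rintro ⟨hA, hA1⟩
        exact hsing A hA hA1
      · rintro rfl
        exact ⟨hisin, Finset.card_singleton i⟩
    unfold iOf
    rw [hfilter, Finset.singleton_biUnion]
    simp only [id]
    rw [dif_pos ⟨i, Finset.mem_singleton_self i⟩]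
    exact Finset.min'_singleton i
  have hnotin : ({i} : Finset ℕ) ∉ π₀.image (Finset.image (fi i)) := by
    intro hmem
    obtain ⟨A₀, hA₀, heq⟩ := Finset.mem_image.mp hmem
    have h2 := part_card_two_le hG hA₀
    have := himg_card A₀ hA₀
    rw [heq] at this
    simp at this
    omega
  have hrecover : ((encodeO n ⟨m, (i, S, T)⟩).erase {i}).image (Finset.image (gi i)) = π₀ := by
    rw [hEO, Finset.erase_insert hnotin, Finset.image_image]
    have heach : ∀ A₀ ∈ π₀, (Finset.image (gi i) ∘ Finset.image (fi i)) A₀ = A₀ := by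
      intro A₀ _
      simp only [Function.comp_apply]
      rw [Finset.image_image]
      have : A₀.image (gi i ∘ fi i) = A₀.image id :=
        Finset.image_congr (fun x _ => gi_fi i x)
      rw [this, Finset.image_id]
    calc π₀.image (Finset.image (gi i) ∘ Finset.image (fi i))
        = π₀.image id := Finset.image_congr (fun A hA => heach A hA)
      _ = π₀ := Finset.image_id
  refine ⟨?_, ⟨{i}, hisin, Finset.card_singleton i⟩, ?_, ?_⟩
  · apply lonely_of_singletons ⟨hpart, hnc⟩
    intro a b ha hb
    have h1 := hsing _ ha rfl
    have h2 := hsing _ hb rfl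
    have := Finset.singleton_injective (h1.trans h2.symm)
    exact this
  · have h1 := decode_S hS hSc hT hTc' hN hm1 hD1
    have h2 := decode_T hS hSc hT hTc' hN hm1 hD1
    unfold decodeO
    simp only
    rw [hiOf, hrecover]
    rw [← hk, ← hπ₀] at h1 h2
    rw [h1, h2, hSc]
    have : m - 1 + 1 = m := by omega
    rw [this]
  · obtain ⟨hk1, hk2⟩ := decode_k hS hSc hT hTc' hN hm1 hD1
    simp only [Finset.mem_Icc]
    exact ⟨hk1, hk2⟩

end Oside
end NCP

namespace NCP
open Finset

section assembly

variable {n : ℕ}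

lemma pairsZ_card :
    (pairsZ n).card = ∑ m ∈ Finset.Icc 1 (n/2), (n+1).choose m * ((n-m-1).choose (m-1)) := by
  unfold pairsZ
  rw [Finset.card_sigma]
  apply Finset.sum_congr rfl
  intro m _
  rw [Finset.card_product, Finset.card_powersetCard, Finset.card_powersetCard,
    Nat.card_Icc, Nat.card_Icc]
  simp

lemma pairsO_card :
    (pairsO n).card
      = ∑ m ∈ Finset.Icc 2 ((n+1)/2), n * (n.choose (m-1) * ((n-m-1).choose (m-2))) := by
  unfold pairsO
  rw [Finset.card_sigma]
  apply Finset.sum_congr rfl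
  intro m _
  rw [Finset.card_product, Finset.card_product, Finset.card_powersetCard,
    Finset.card_powersetCard, Nat.card_Icc]
  simp

variable (hn : 2 ≤ n)

include hn in
lemma surjZ_card :
    (pairsZ n).card ≤ ((pairsZ n).image (encodeZ n)).card * (n+1) := by
  classical
  have hsurj : Set.SurjOn (decodeZ n)
      ↑(((pairsZ n).image (encodeZ n)) ×ˢ Finset.Icc 1 (n+1)) ↑(pairsZ n) := by
    intro x hx
    simp only [Finset.mem_coe] at hx
    obtain ⟨m, S, T⟩ := x
    obtain ⟨-, -, hd, hk⟩ := encodeZ_spec hn hx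
    refine ⟨(encodeZ n ⟨m, (S, T)⟩, argminW (n+1) (encP (n+1) S T)), ?_, hd⟩
    simp only [Finset.coe_product, Set.mem_prod, Finset.mem_coe]
    exact ⟨Finset.mem_image_of_mem _ hx, hk⟩
  have := Finset.card_le_card_of_surjOn (decodeZ n) hsurj
  rwa [Finset.card_product, Nat.card_Icc, Nat.add_sub_cancel] at this

include hn in
lemma surjO_card :
    (pairsO n).card ≤ ((pairsO n).image (encodeO n)).card * n := by
  classical
  have hsurj : Set.SurjOn (decodeO n)
      ↑(((pairsO n).image (encodeO n)) ×ˢ Finset.Icc 1 n) ↑(pairsO n) := by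
    intro x hx
    simp only [Finset.mem_coe] at hx
    obtain ⟨m, i, S, T⟩ := x
    obtain ⟨-, -, hd, hk⟩ := encodeO_spec hn hx
    refine ⟨(encodeO n ⟨m, (i, S, T)⟩, argminW n (encP n S T)), ?_, hd⟩
    simp only [Finset.coe_product, Set.mem_prod, Finset.mem_coe]
    exact ⟨Finset.mem_image_of_mem _ hx, hk⟩
  have := Finset.card_le_card_of_surjOn (decodeO n) hsurj
  rwa [Finset.card_product, Nat.card_Icc, Nat.add_sub_cancel] at this

include hn in
lemma images_disjoint :
    Disjoint ((pairsZ n).image (encodeZ n)) ((pairsO n).image (encodeO n)) := by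
  classical
  rw [Finset.disjoint_left]
  rintro π hπZ hπO
  obtain ⟨x, hx, rfl⟩ := Finset.mem_image.mp hπZ
  obtain ⟨y, hy, heq⟩ := Finset.mem_image.mp hπO
  obtain ⟨mx, Sx, Tx⟩ := x
  obtain ⟨my, iy, Sy, Ty⟩ := y
  have h2 := (encodeZ_spec hn hx).2.1
  obtain ⟨A, hA, hA1⟩ := (encodeO_spec hn hy).2.1
  rw [heq] at hA
  have := h2 A hA
  omega

include hn in
lemma union_le_Lnum :
    (((pairsZ n).image (encodeZ n)) ∪ ((pairsO n).image (encodeO n))).card ≤ Lnum n := by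
  classical
  set U := ((pairsZ n).image (encodeZ n)) ∪ ((pairsO n).image (encodeO n)) with hU
  have hsub : ↑U ⊆ {π : Finset (Finset ℕ) | IsLonely n π} := by
    intro π hπ
    simp only [Finset.mem_coe, hU, Finset.mem_union] at hπ
    rcases hπ with h | h
    · obtain ⟨x, hx, rfl⟩ := Finset.mem_image.mp h
      obtain ⟨mx, Sx, Tx⟩ := x
      exact (encodeZ_spec hn hx).1
    · obtain ⟨y, hy, rfl⟩ := Finset.mem_image.mp h
      obtain ⟨my, iy, Sy, Ty⟩ := y
      exact (encodeO_spec hn hy).1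
  have hfin : {π : Finset (Finset ℕ) | IsLonely n π}.Finite := by
    apply Set.Finite.subset (Finset.finite_toSet ((Finset.Icc 1 n).powerset.powerset))
    intro π hπ
    simp only [Set.mem_setOf_eq] at hπ
    simp only [Finset.mem_coe, Finset.mem_powerset]
    intro A hA
    simp only [Finset.mem_powerset]
    intro a ha
    exact (hπ.1.1.2.2 a).mpr ⟨A, hA, ha⟩
  calc U.card = (↑U : Set (Finset (Finset ℕ))).ncard := (Set.ncard_coe_finset U).symm
    _ ≤ Lnum n := Set.ncard_le_ncard hsub hfin

end assembly
end NCP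

theorem stmt14 (n : ℕ) (hn : 2 ≤ n) :
    (Lnum n : ℚ) ≥
      (∑ m ∈ Finset.Icc 1 (n / 2),
        (1 / ((n : ℚ) - m + 1)) * (n.choose m) * ((n - m - 1).choose (m - 1))) +
      (∑ m ∈ Finset.Icc 2 ((n + 1) / 2),
        ((n.choose (m - 1) : ℚ)) * ((n - m - 1).choose (m - 2))) := by
  classical
  open NCP in
  have hZcard := NCP.surjZ_card hn
  have hOcard := NCP.surjO_card hn
  have hdisj := NCP.images_disjoint hn
  have hunion := NCP.union_le_Lnum hn
  rw [Finset.card_union_of_disjoint hdisj] at hunion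
  set ZC := ((NCP.pairsZ n).image (NCP.encodeZ n)).card with hZC
  set OC := ((NCP.pairsO n).image (NCP.encodeO n)).card with hOC
  -- first sum bound
  have hsum1 : (∑ m ∈ Finset.Icc 1 (n / 2),
      (1 / ((n : ℚ) - m + 1)) * (n.choose m) * ((n - m - 1).choose (m - 1))) ≤ (ZC : ℚ) := by
    have hterm : ∀ m ∈ Finset.Icc 1 (n/2),
        (1 / ((n : ℚ) - m + 1)) * (n.choose m) * ((n - m - 1).choose (m - 1))
          = (((n+1).choose m * ((n-m-1).choose (m-1)) : ℕ) : ℚ) / (n+1) := by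
      intro m hm
      simp only [Finset.mem_Icc] at hm
      have hmn : m ≤ n := by omega
      have hcast : ((n : ℚ) - m + 1) = ((n - m + 1 : ℕ) : ℚ) := by
        push_cast [Nat.cast_sub hmn]
        ring
      have hid : (n.choose m) * (n + 1) = (n+1).choose m * (n - m + 1) := by
        have := Nat.choose_mul_succ_eq n m
        have h2 : n + 1 - m = n - m + 1 := by omega
        rw [h2] at this
        exact this
      rw [hcast]
      have hpos1 : (0:ℚ) < ((n - m + 1 : ℕ) : ℚ) := by positivity
      have hpos2 : (0:ℚ) < ((n:ℚ) + 1) := by positivity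
      have hidq : ((n.choose m : ℚ)) * ((n:ℚ) + 1)
          = (((n+1).choose m : ℚ)) * (((n - m : ℕ) : ℚ) + 1) := by
        exact_mod_cast hid
      have hstep : (1 / ((n - m + 1 : ℕ) : ℚ)) * (n.choose m) * ((n-m-1).choose (m-1))
          = ((n.choose m : ℚ) * ((n-m-1).choose (m-1))) / ((n - m + 1 : ℕ) : ℚ) := by
        ring
      rw [hstep, div_eq_div_iff hpos1.ne' (by positivity : ((n:ℚ)+1) ≠ 0)]
      push_cast
      linear_combination (((n - m - 1).choose (m - 1) : ℚ)) * hidq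
    rw [Finset.sum_congr rfl hterm]
    rw [← Finset.sum_div]
    rw [div_le_iff₀ (by positivity : (0:ℚ) < (n:ℚ)+1)]
    have : (∑ m ∈ Finset.Icc 1 (n/2), (((n+1).choose m * ((n-m-1).choose (m-1)) : ℕ) : ℚ))
        = ((NCP.pairsZ n).card : ℚ) := by
      rw [NCP.pairsZ_card]
      push_cast
      rfl
    rw [this]
    have h1 : ((NCP.pairsZ n).card : ℚ) ≤ (ZC : ℚ) * ((n:ℚ)+1) := by
      have : ((NCP.pairsZ n).card : ℚ) ≤ ((ZC * (n+1) : ℕ) : ℚ) := by exact_mod_cast hZcard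
      push_cast at this
      linarith
    linarith
  -- second sum bound
  have hsum2 : (∑ m ∈ Finset.Icc 2 ((n + 1) / 2),
      ((n.choose (m - 1) : ℚ)) * ((n - m - 1).choose (m - 2))) ≤ (OC : ℚ) := by
    have hO : (∑ m ∈ Finset.Icc 2 ((n+1)/2), n.choose (m-1) * ((n-m-1).choose (m-2))) ≤ OC := by
      have hfac : n * (∑ m ∈ Finset.Icc 2 ((n+1)/2), n.choose (m-1) * ((n-m-1).choose (m-2)))
          = (NCP.pairsO n).card := by
        rw [NCP.pairsO_card, Finset.mul_sum]
      have := hOcard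
      rw [← hfac] at this
      have hn0 : 0 < n := by omega
      calc (∑ m ∈ Finset.Icc 2 ((n+1)/2), n.choose (m-1) * ((n-m-1).choose (m-2)))
          = n * (∑ m ∈ Finset.Icc 2 ((n+1)/2), n.choose (m-1) * ((n-m-1).choose (m-2))) / n := by
            rw [Nat.mul_div_cancel_left _ hn0]
        _ ≤ OC * n / n := Nat.div_le_div_right (by omega)
        _ = OC := Nat.mul_div_cancel _ hn0
    calc (∑ m ∈ Finset.Icc 2 ((n + 1) / 2),
        ((n.choose (m - 1) : ℚ)) * ((n - m - 1).choose (m - 2)))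
        = ((∑ m ∈ Finset.Icc 2 ((n+1)/2), n.choose (m-1) * ((n-m-1).choose (m-2)) : ℕ) : ℚ) := by
          push_cast
          rfl
      _ ≤ (OC : ℚ) := by exact_mod_cast hO
  have hL : (ZC : ℚ) + (OC : ℚ) ≤ (Lnum n : ℚ) := by
    have : ((ZC + OC : ℕ) : ℚ) ≤ ((Lnum n : ℕ) : ℚ) := by exact_mod_cast hunion
    push_cast at this
    linarith
  linarith
end

section
/- The set of marriageable singles partitions of [n] with exactly two singleton blocks {i} and {j} (i < j) whose merger remains noncrossing is in bijection with the set of triples ({i,j}, π₁, π₂) where 1 ≤ i < j ≤ n, π₁ is a noncrossing partition of [n+i−j−1] with no singleton block, and π₂ is a noncrossing partition of [j−i−1] with no singleton block. -/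
namespace S15

def outMap (i j y : ℕ) : ℕ := if y < i then y else y + (j - i + 1)
def outInv (i j x : ℕ) : ℕ := if x < i then x else x - (j - i + 1)
def innMap (i y : ℕ) : ℕ := y + i
def innInv (i x : ℕ) : ℕ := x - i

lemma outInv_outMap (i j y : ℕ) : outInv i j (outMap i j y) = y := by
  unfold outMap outInv; split_ifs <;> omega

lemma outMap_outInv {i j x : ℕ} (hij : i < j) (hx : x < i ∨ j < x) :
    outMap i j (outInv i j x) = x := by
  unfold outMap outInv; split_ifs <;> omega

lemma outMap_mono {i j x y : ℕ} (h : x < y) : outMap i j x < outMap i j y := by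
  unfold outMap; split_ifs <;> omega

lemma outMap_lt_or {i j : ℕ} (hij : i < j) (y : ℕ) :
    outMap i j y < i ∨ j < outMap i j y := by
  unfold outMap; split_ifs <;> omega

lemma outMap_inj {i j x y : ℕ} (h : outMap i j x = outMap i j y) : x = y := by
  have := congrArg (outInv i j) h
  simpa [outInv_outMap] using this

lemma crossing_mono {s t : Finset (Finset ℕ)} (hst : s ⊆ t) (h : Crossing s) : Crossing t := by
  obtain ⟨A, hA, B, hB, hAB, a, ha, b, hb, c, hc, d, hd, h1, h2, h3⟩ := h
  exact ⟨A, hst hA, B, hst hB, hAB, a, ha, b, hb, c, hc, d, hd, h1, h2, h3⟩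

/-- Generic transport of a "partial noncrossing partition" along an order iso between
the covered sets. -/
lemma transport {π : Finset (Finset ℕ)} {P Q : ℕ → Prop} {ψ : ℕ → ℕ}
    (hne : ∀ A ∈ π, A.Nonempty)
    (hdisj : ∀ A ∈ π, ∀ B ∈ π, A ≠ B → Disjoint A B)
    (hcover : ∀ x, P x ↔ ∃ A ∈ π, x ∈ A)
    (hnc : ¬ Crossing π)
    (hinj : ∀ x₁ x₂, P x₁ → P x₂ → ψ x₁ = ψ x₂ → x₁ = x₂)
    (hmono : ∀ x₁ x₂, P x₁ → P x₂ → x₁ < x₂ → ψ x₁ < ψ x₂)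
    (hQP : ∀ y, Q y → ∃ x, P x ∧ ψ x = y)
    (hPQ : ∀ x, P x → Q (ψ x)) :
    (∀ A ∈ π.image (Finset.image ψ), A.Nonempty) ∧
    (∀ A ∈ π.image (Finset.image ψ), ∀ B ∈ π.image (Finset.image ψ), A ≠ B → Disjoint A B) ∧
    (∀ y, Q y ↔ ∃ A ∈ π.image (Finset.image ψ), y ∈ A) ∧
    ¬ Crossing (π.image (Finset.image ψ)) ∧
    (∀ A ∈ π, (A.image ψ).card = A.card) := by
  have hP : ∀ A ∈ π, ∀ x ∈ A, P x := fun A hA x hx => (hcover x).2 ⟨A, hA, hx⟩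
  have hrefl : ∀ x₁ x₂, P x₁ → P x₂ → ψ x₁ < ψ x₂ → x₁ < x₂ := by
    intro x₁ x₂ p1 p2 h
    rcases lt_trichotomy x₁ x₂ with h' | h' | h'
    · exact h'
    · subst h'; omega
    · exact absurd (hmono _ _ p2 p1 h') (by omega)
  refine ⟨?_, ?_, ?_, ?_, ?_⟩
  · intro A hA
    obtain ⟨B, hB, rfl⟩ := Finset.mem_image.mp hA
    exact (hne B hB).image ψ
  · intro A' hA' B' hB' hne'
    obtain ⟨A, hA, rfl⟩ := Finset.mem_image.mp hA'
    obtain ⟨B, hB, rfl⟩ := Finset.mem_image.mp hB'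
    have hAB : A ≠ B := fun h => hne' (by rw [h])
    rw [Finset.disjoint_left]
    intro y hyA hyB
    obtain ⟨a, ha, rfl⟩ := Finset.mem_image.mp hyA
    obtain ⟨b, hb, hba⟩ := Finset.mem_image.mp hyB
    have : b = a := hinj _ _ (hP B hB b hb) (hP A hA a ha) hba
    subst this
    exact (Finset.disjoint_left.mp (hdisj A hA B hB hAB) ha) hb
  · intro y
    constructor
    · intro hy
      obtain ⟨x, px, rfl⟩ := hQP y hy
      obtain ⟨A, hA, hx⟩ := (hcover x).1 px
      exact ⟨A.image ψ, Finset.mem_image_of_mem _ hA, Finset.mem_image_of_mem _ hx⟩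
    · rintro ⟨A', hA', hy⟩
      obtain ⟨A, hA, rfl⟩ := Finset.mem_image.mp hA'
      obtain ⟨x, hx, rfl⟩ := Finset.mem_image.mp hy
      exact hPQ x (hP A hA x hx)
  · rintro ⟨A', hA', B', hB', hne', a, ha, b, hb, c, hc, d, hd, h1, h2, h3⟩
    obtain ⟨A, hA, rfl⟩ := Finset.mem_image.mp hA'
    obtain ⟨B, hB, rfl⟩ := Finset.mem_image.mp hB'
    have hAB : A ≠ B := fun h => hne' (by rw [h])
    obtain ⟨a₀, ha₀, rfl⟩ := Finset.mem_image.mp ha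
    obtain ⟨b₀, hb₀, rfl⟩ := Finset.mem_image.mp hb
    obtain ⟨c₀, hc₀, rfl⟩ := Finset.mem_image.mp hc
    obtain ⟨d₀, hd₀, rfl⟩ := Finset.mem_image.mp hd
    have pa := hP A hA a₀ ha₀
    have pb := hP A hA b₀ hb₀
    have pc := hP B hB c₀ hc₀
    have pd := hP B hB d₀ hd₀
    exact hnc ⟨A, hA, B, hB, hAB, a₀, ha₀, b₀, hb₀, c₀, hc₀, d₀, hd₀,
      hrefl _ _ pa pc h1, hrefl _ _ pc pb h2, hrefl _ _ pb pd h3⟩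
  · intro A hA
    exact Finset.card_image_of_injOn fun x hx y hy h => hinj _ _ (hP A hA x hx) (hP A hA y hy) h


def build (i j : ℕ) (π₁ π₂ : Finset (Finset ℕ)) : Finset (Finset ℕ) :=
  insert {i} (insert {j} (π₁.image (Finset.image (outMap i j)) ∪ π₂.image (Finset.image (innMap i))))

lemma build_mem {i j : ℕ} {π₁ π₂ : Finset (Finset ℕ)} {A : Finset ℕ} :
    A ∈ build i j π₁ π₂ ↔ A = {i} ∨ A = {j} ∨
      A ∈ π₁.image (Finset.image (outMap i j)) ∨ A ∈ π₂.image (Finset.image (innMap i)) := by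
  simp [build, Finset.mem_insert, Finset.mem_union, or_assoc]

section Main

variable {n i j : ℕ} {π₁ π₂ : Finset (Finset ℕ)}

theorem build_left (hi : 1 ≤ i) (hij : i < j) (hj : j ≤ n)
    (H1 : IsNCPartition (n + i - j - 1) π₁) (hs1 : ∀ A ∈ π₁, A.card ≠ 1)
    (H2 : IsNCPartition (j - i - 1) π₂) (hs2 : ∀ A ∈ π₂, A.card ≠ 1) :
    IsNCPartition n (build i j π₁ π₂) ∧
    ((build i j π₁ π₂).filter fun A => A.card = 1) = {({i} : Finset ℕ), {j}} ∧
    IsNCPartition n (mergeSingles (build i j π₁ π₂) i j) := by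
  obtain ⟨⟨ne1, dj1, cov1⟩, nc1⟩ := H1
  obtain ⟨⟨ne2, dj2, cov2⟩, nc2⟩ := H2
  have T1 := transport (P := fun x => x ∈ Finset.Icc 1 (n + i - j - 1))
      (Q := fun x => x ∈ Finset.Icc 1 n ∧ (x < i ∨ j < x)) (ψ := outMap i j)
      ne1 dj1 cov1 nc1
      (fun x₁ x₂ _ _ h => outMap_inj h)
      (fun x₁ x₂ _ _ h => outMap_mono h)
      (fun y hy => ⟨outInv i j y, by
        simp only [Finset.mem_Icc] at *
        unfold outInv; constructor
        · split_ifs <;> omega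
        · rw [show (if y < i then y else y - (j - i + 1)) = outInv i j y from rfl]
          exact outMap_outInv hij hy.2⟩)
      (fun x hx => by
        simp only [Finset.mem_Icc] at *
        unfold outMap; split_ifs <;> omega)
  have T2 := transport (P := fun x => x ∈ Finset.Icc 1 (j - i - 1))
      (Q := fun x => x ∈ Finset.Icc 1 n ∧ (i < x ∧ x < j)) (ψ := innMap i)
      ne2 dj2 cov2 nc2
      (fun x₁ x₂ _ _ h => by unfold innMap at h; omega)
      (fun x₁ x₂ _ _ h => by unfold innMap; omega)
      (fun y hy => ⟨y - i, by simp only [Finset.mem_Icc] at *; unfold innMap; omega⟩)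
      (fun x hx => by simp only [Finset.mem_Icc] at *; unfold innMap; omega)
  obtain ⟨Ne1, Dj1, Cov1, Nc1, Card1⟩ := T1
  obtain ⟨Ne2, Dj2, Cov2, Nc2, Card2⟩ := T2
  set R1 := π₁.image (Finset.image (outMap i j)) with hR1
  set R2 := π₂.image (Finset.image (innMap i)) with hR2
  have elem1 : ∀ A ∈ R1, ∀ y ∈ A, y ∈ Finset.Icc 1 n ∧ (y < i ∨ j < y) :=
    fun A hA y hy => (Cov1 y).2 ⟨A, hA, hy⟩
  have elem2 : ∀ A ∈ R2, ∀ y ∈ A, y ∈ Finset.Icc 1 n ∧ (i < y ∧ y < j) :=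
    fun A hA y hy => (Cov2 y).2 ⟨A, hA, hy⟩
  have card1 : ∀ A ∈ R1, 2 ≤ A.card := by
    rintro A hA
    obtain ⟨B, hB, rfl⟩ := Finset.mem_image.mp hA
    have := (ne1 B hB).card_pos
    have := hs1 B hB
    rw [Card1 B hB]; omega
  have card2 : ∀ A ∈ R2, 2 ≤ A.card := by
    rintro A hA
    obtain ⟨B, hB, rfl⟩ := Finset.mem_image.mp hA
    have := (ne2 B hB).card_pos
    have := hs2 B hB
    rw [Card2 B hB]; omega
  have iNotR1 : ∀ A ∈ R1, i ∉ A ∧ j ∉ A := by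
    intro A hA
    constructor <;> intro h <;> have := elem1 A hA _ h <;> omega
  have iNotR2 : ∀ A ∈ R2, i ∉ A ∧ j ∉ A := by
    intro A hA
    constructor <;> intro h <;> have := elem2 A hA _ h <;> omega
  have dis12 : ∀ A ∈ R1, ∀ B ∈ R2, Disjoint A B := by
    intro A hA B hB
    rw [Finset.disjoint_left]
    intro y hyA hyB
    have := elem1 A hA y hyA; have := elem2 B hB y hyB; omega
  -- blocks nonempty
  have Bne : ∀ A ∈ build i j π₁ π₂, A.Nonempty := by
    intro A hA
    rcases build_mem.mp hA with rfl | rfl | h | h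
    · exact ⟨i, Finset.mem_singleton_self i⟩
    · exact ⟨j, Finset.mem_singleton_self j⟩
    · exact Ne1 A h
    · exact Ne2 A h
  -- disjointness
  have Bdj : ∀ A ∈ build i j π₁ π₂, ∀ B ∈ build i j π₁ π₂, A ≠ B → Disjoint A B := by
    intro A hA B hB hAB
    rcases build_mem.mp hA with rfl | rfl | h | h <;>
      rcases build_mem.mp hB with rfl | rfl | h' | h'
    · simp at hAB
    · simp [Finset.disjoint_singleton_right]; omega
    · simp [Finset.disjoint_singleton_left]; exact (iNotR1 B h').1
    · simp [Finset.disjoint_singleton_left]; exact (iNotR2 B h').1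
    · simp [Finset.disjoint_singleton_right]; omega
    · simp at hAB
    · simp [Finset.disjoint_singleton_left]; exact (iNotR1 B h').2
    · simp [Finset.disjoint_singleton_left]; exact (iNotR2 B h').2
    · simp [Finset.disjoint_singleton_right]; exact (iNotR1 A h).1
    · simp [Finset.disjoint_singleton_right]; exact (iNotR1 A h).2
    · exact Dj1 A h B h' hAB
    · exact dis12 A h B h'
    · simp [Finset.disjoint_singleton_right]; exact (iNotR2 A h).1
    · simp [Finset.disjoint_singleton_right]; exact (iNotR2 A h).2
    · exact (dis12 B h' A h).symm
    · exact Dj2 A h B h' hAB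
  -- cover
  have Bcov : ∀ x : ℕ, x ∈ Finset.Icc 1 n ↔ ∃ A ∈ build i j π₁ π₂, x ∈ A := by
    intro x
    constructor
    · intro hx
      rcases Nat.lt_trichotomy x i with h | h | h
      · obtain ⟨A, hA, hxA⟩ := (Cov1 x).1 ⟨hx, Or.inl h⟩
        exact ⟨A, build_mem.mpr (Or.inr (Or.inr (Or.inl hA))), hxA⟩
      · exact ⟨{i}, build_mem.mpr (Or.inl rfl), by simp [h]⟩
      · rcases Nat.lt_trichotomy x j with h' | h' | h'
        · obtain ⟨A, hA, hxA⟩ := (Cov2 x).1 ⟨hx, h, h'⟩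
          exact ⟨A, build_mem.mpr (Or.inr (Or.inr (Or.inr hA))), hxA⟩
        · exact ⟨{j}, build_mem.mpr (Or.inr (Or.inl rfl)), by simp [h']⟩
        · obtain ⟨A, hA, hxA⟩ := (Cov1 x).1 ⟨hx, Or.inr h'⟩
          exact ⟨A, build_mem.mpr (Or.inr (Or.inr (Or.inl hA))), hxA⟩
    · rintro ⟨A, hA, hxA⟩
      rcases build_mem.mp hA with rfl | rfl | h | h
      · simp only [Finset.mem_singleton] at hxA; subst hxA; simp only [Finset.mem_Icc]; omega
      · simp only [Finset.mem_singleton] at hxA; subst hxA; simp only [Finset.mem_Icc]; omega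
      · exact (elem1 A h x hxA).1
      · exact (elem2 A h x hxA).1
  -- noncrossing (general helper used for both build and merged)
  have crossHelp : ∀ A, (A ∈ R1 ∨ A ∈ R2) → ∀ B, (B ∈ R1 ∨ B ∈ R2) → A ≠ B →
      ∀ a ∈ A, ∀ b ∈ A, ∀ c ∈ B, ∀ d ∈ B, a < c → c < b → b < d → False := by
    intro A hA B hB hAB a ha b hb c hc d hd h1 h2 h3
    rcases hA with hA | hA <;> rcases hB with hB | hB
    · exact Nc1 ⟨A, hA, B, hB, hAB, a, ha, b, hb, c, hc, d, hd, h1, h2, h3⟩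
    · have := elem1 A hA b hb; have := elem2 B hB c hc; have := elem2 B hB d hd; omega
    · have := elem2 A hA a ha; have := elem2 A hA b hb; have := elem1 B hB c hc; omega
    · exact Nc2 ⟨A, hA, B, hB, hAB, a, ha, b, hb, c, hc, d, hd, h1, h2, h3⟩
  have Bnc : ¬ Crossing (build i j π₁ π₂) := by
    rintro ⟨A, hA, B, hB, hAB, a, ha, b, hb, c, hc, d, hd, h1, h2, h3⟩
    have hA2 : A ∈ R1 ∨ A ∈ R2 := by
      rcases build_mem.mp hA with rfl | rfl | h | h
      · simp only [Finset.mem_singleton] at ha hb; omega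
      · simp only [Finset.mem_singleton] at ha hb; omega
      · exact Or.inl h
      · exact Or.inr h
    have hB2 : B ∈ R1 ∨ B ∈ R2 := by
      rcases build_mem.mp hB with rfl | rfl | h | h
      · simp only [Finset.mem_singleton] at hc hd; omega
      · simp only [Finset.mem_singleton] at hc hd; omega
      · exact Or.inl h
      · exact Or.inr h
    exact crossHelp A hA2 B hB2 hAB a ha b hb c hc d hd h1 h2 h3
  -- filter
  have Bfilter : ((build i j π₁ π₂).filter fun A => A.card = 1) = {({i} : Finset ℕ), {j}} := by
    ext A
    simp only [Finset.mem_filter, Finset.mem_insert, Finset.mem_singleton]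
    constructor
    · rintro ⟨hA, hcard⟩
      rcases build_mem.mp hA with rfl | rfl | h | h
      · exact Or.inl rfl
      · exact Or.inr rfl
      · have := card1 A h; omega
      · have := card2 A h; omega
    · rintro (rfl | rfl)
      · exact ⟨build_mem.mpr (Or.inl rfl), Finset.card_singleton i⟩
      · exact ⟨build_mem.mpr (Or.inr (Or.inl rfl)), Finset.card_singleton j⟩
  -- merged
  have hiR : ({i} : Finset ℕ) ∉ R1 ∪ R2 := by
    intro h
    rcases Finset.mem_union.mp h with h | h
    · have := card1 _ h; simp at this
    · have := card2 _ h; simp at this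
  have hjR : ({j} : Finset ℕ) ∉ R1 ∪ R2 := by
    intro h
    rcases Finset.mem_union.mp h with h | h
    · have := card1 _ h; simp at this
    · have := card2 _ h; simp at this
  have hmerge : mergeSingles (build i j π₁ π₂) i j = insert {i, j} (R1 ∪ R2) := by
    unfold mergeSingles build
    rw [Finset.erase_insert (by
      simp only [Finset.mem_insert]
      push_neg
      exact ⟨by simp [Finset.ext_iff]; omega, hiR⟩)]
    rw [Finset.erase_insert hjR]
  have mmem : ∀ {A : Finset ℕ}, A ∈ insert ({i, j} : Finset ℕ) (R1 ∪ R2) ↔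
      A = {i, j} ∨ A ∈ R1 ∨ A ∈ R2 := by
    intro A; simp [Finset.mem_insert, Finset.mem_union]
  have habij : ∀ {a b : ℕ}, a ∈ ({i, j} : Finset ℕ) → b ∈ ({i, j} : Finset ℕ) → a < b →
      a = i ∧ b = j := by
    intro a b ha hb hab
    simp only [Finset.mem_insert, Finset.mem_singleton] at ha hb
    omega
  have Mne : ∀ A ∈ insert ({i, j} : Finset ℕ) (R1 ∪ R2), A.Nonempty := by
    intro A hA
    rcases mmem.mp hA with rfl | h | h
    · exact ⟨i, by simp⟩
    · exact Ne1 A h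
    · exact Ne2 A h
  have Mdj : ∀ A ∈ insert ({i, j} : Finset ℕ) (R1 ∪ R2),
      ∀ B ∈ insert ({i, j} : Finset ℕ) (R1 ∪ R2), A ≠ B → Disjoint A B := by
    intro A hA B hB hAB
    have dijR : ∀ C, (C ∈ R1 ∨ C ∈ R2) → Disjoint ({i, j} : Finset ℕ) C := by
      intro C hC
      rw [Finset.disjoint_left]
      intro x hx hxC
      simp only [Finset.mem_insert, Finset.mem_singleton] at hx
      rcases hC with hC | hC
      · have := iNotR1 C hC; rcases hx with rfl | rfl <;> tauto
      · have := iNotR2 C hC; rcases hx with rfl | rfl <;> tauto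
    rcases mmem.mp hA with rfl | h | h <;> rcases mmem.mp hB with rfl | h' | h'
    · exact absurd rfl hAB
    · exact dijR B (Or.inl h')
    · exact dijR B (Or.inr h')
    · exact (dijR A (Or.inl h)).symm
    · exact Dj1 A h B h' hAB
    · exact dis12 A h B h'
    · exact (dijR A (Or.inr h)).symm
    · exact (dis12 B h' A h).symm
    · exact Dj2 A h B h' hAB
  have Mcov : ∀ x : ℕ, x ∈ Finset.Icc 1 n ↔
      ∃ A ∈ insert ({i, j} : Finset ℕ) (R1 ∪ R2), x ∈ A := by
    intro x
    constructor
    · intro hx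
      rcases Nat.lt_trichotomy x i with h | h | h
      · obtain ⟨A, hA, hxA⟩ := (Cov1 x).1 ⟨hx, Or.inl h⟩
        exact ⟨A, mmem.mpr (Or.inr (Or.inl hA)), hxA⟩
      · exact ⟨{i, j}, mmem.mpr (Or.inl rfl), by simp [h]⟩
      · rcases Nat.lt_trichotomy x j with h' | h' | h'
        · obtain ⟨A, hA, hxA⟩ := (Cov2 x).1 ⟨hx, h, h'⟩
          exact ⟨A, mmem.mpr (Or.inr (Or.inr hA)), hxA⟩
        · exact ⟨{i, j}, mmem.mpr (Or.inl rfl), by simp [h']⟩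
        · obtain ⟨A, hA, hxA⟩ := (Cov1 x).1 ⟨hx, Or.inr h'⟩
          exact ⟨A, mmem.mpr (Or.inr (Or.inl hA)), hxA⟩
    · rintro ⟨A, hA, hxA⟩
      rcases mmem.mp hA with rfl | h | h
      · simp only [Finset.mem_insert, Finset.mem_singleton] at hxA
        simp only [Finset.mem_Icc]; omega
      · exact (elem1 A h x hxA).1
      · exact (elem2 A h x hxA).1
  have Mnc : ¬ Crossing (insert ({i, j} : Finset ℕ) (R1 ∪ R2)) := by
    rintro ⟨A, hA, B, hB, hAB, a, ha, b, hb, c, hc, d, hd, h1, h2, h3⟩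
    rcases mmem.mp hA with rfl | h | h <;> rcases mmem.mp hB with rfl | h' | h'
    · exact absurd rfl hAB
    · obtain ⟨rfl, rfl⟩ := habij ha hb (by omega)
      have := elem1 B h' c hc; omega
    · obtain ⟨rfl, rfl⟩ := habij ha hb (by omega)
      have := elem2 B h' d hd; omega
    · obtain ⟨rfl, rfl⟩ := habij hc hd (by omega)
      have := elem1 A h b hb; omega
    · exact crossHelp A (Or.inl h) B (Or.inl h') hAB a ha b hb c hc d hd h1 h2 h3
    · exact crossHelp A (Or.inl h) B (Or.inr h') hAB a ha b hb c hc d hd h1 h2 h3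
    · obtain ⟨rfl, rfl⟩ := habij hc hd (by omega)
      have := elem2 A h a ha; omega
    · exact crossHelp A (Or.inr h) B (Or.inl h') hAB a ha b hb c hc d hd h1 h2 h3
    · exact crossHelp A (Or.inr h) B (Or.inr h') hAB a ha b hb c hc d hd h1 h2 h3
  refine ⟨⟨⟨Bne, Bdj, Bcov⟩, Bnc⟩, Bfilter, ?_⟩
  rw [hmerge]
  exact ⟨⟨Mne, Mdj, Mcov⟩, Mnc⟩

end Main

lemma image_fix {f : ℕ → ℕ} {B : Finset ℕ} (h : ∀ x ∈ B, f x = x) : B.image f = B := by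
  ext y
  simp only [Finset.mem_image]
  constructor
  · rintro ⟨x, hx, rfl⟩; rw [h x hx]; exact hx
  · intro hy; exact ⟨y, hy, h y hy⟩

lemma pair_eq {i j i' j' : ℕ} (hij : i < j) (hij' : i' < j')
    (h : ({({i} : Finset ℕ), {j}} : Finset (Finset ℕ)) = {({i'} : Finset ℕ), {j'}}) :
    i = i' ∧ j = j' := by
  have h1 := (Finset.ext_iff.mp h {i}).mp (by simp)
  have h2 := (Finset.ext_iff.mp h {j}).mp (by simp)
  have h3 := (Finset.ext_iff.mp h {i'}).mpr (by simp)
  simp only [Finset.mem_insert, Finset.mem_singleton, Finset.singleton_inj] at h1 h2 h3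
  omega

theorem build_sub {i j : ℕ} {π₁ π₂ π₁' π₂' : Finset (Finset ℕ)} (hij : i < j)
    (ne1 : ∀ A ∈ π₁, A.Nonempty) (hs1 : ∀ A ∈ π₁, A.card ≠ 1)
    (ne2 : ∀ A ∈ π₂, A.Nonempty) (hs2 : ∀ A ∈ π₂, A.card ≠ 1)
    (cov2 : ∀ x, x ∈ Finset.Icc 1 (j - i - 1) ↔ ∃ A ∈ π₂, x ∈ A)
    (cov2' : ∀ x, x ∈ Finset.Icc 1 (j - i - 1) ↔ ∃ A ∈ π₂', x ∈ A)
    (heq : build i j π₁ π₂ = build i j π₁' π₂') : π₁ ⊆ π₁' ∧ π₂ ⊆ π₂' := by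
  have hinj1 : Function.Injective (outMap i j) := fun _ _ h => outMap_inj h
  have hinj2 : Function.Injective (innMap i) := fun x y h => by unfold innMap at h; omega
  constructor
  · intro A hA
    have hmem : A.image (outMap i j) ∈ build i j π₁' π₂' := by
      rw [← heq]
      exact build_mem.mpr (Or.inr (Or.inr (Or.inl (Finset.mem_image_of_mem _ hA))))
    rcases build_mem.mp hmem with h | h | h | h
    · exfalso
      have := congrArg Finset.card h
      rw [Finset.card_image_of_injective _ hinj1, Finset.card_singleton] at this
      exact hs1 A hA this
    · exfalso
      have := congrArg Finset.card h
      rw [Finset.card_image_of_injective _ hinj1, Finset.card_singleton] at this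
      exact hs1 A hA this
    · obtain ⟨B, hB, hBe⟩ := Finset.mem_image.mp h
      have : B = A := Finset.image_injective hinj1 hBe
      exact this ▸ hB
    · exfalso
      obtain ⟨B, hB, hBe⟩ := Finset.mem_image.mp h
      obtain ⟨a, ha⟩ := ne1 A hA
      have hmem2 : outMap i j a ∈ B.image (innMap i) := hBe ▸ Finset.mem_image_of_mem _ ha
      obtain ⟨b, hb, hbe⟩ := Finset.mem_image.mp hmem2
      have hbI : b ∈ Finset.Icc 1 (j - i - 1) := (cov2' b).mpr ⟨B, hB, hb⟩
      simp only [Finset.mem_Icc] at hbI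
      have := outMap_lt_or hij a
      unfold innMap at hbe
      omega
  · intro A hA
    have hAI : ∀ x ∈ A, 1 ≤ x ∧ x ≤ j - i - 1 := by
      intro x hx
      have := (cov2 x).mpr ⟨A, hA, hx⟩
      simpa [Finset.mem_Icc] using this
    have hmem : A.image (innMap i) ∈ build i j π₁' π₂' := by
      rw [← heq]
      exact build_mem.mpr (Or.inr (Or.inr (Or.inr (Finset.mem_image_of_mem _ hA))))
    rcases build_mem.mp hmem with h | h | h | h
    · exfalso
      have := congrArg Finset.card h
      rw [Finset.card_image_of_injective _ hinj2, Finset.card_singleton] at this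
      exact hs2 A hA this
    · exfalso
      have := congrArg Finset.card h
      rw [Finset.card_image_of_injective _ hinj2, Finset.card_singleton] at this
      exact hs2 A hA this
    · exfalso
      obtain ⟨B, hB, hBe⟩ := Finset.mem_image.mp h
      obtain ⟨a, ha⟩ := ne2 A hA
      have hmem2 : innMap i a ∈ B.image (outMap i j) := hBe.symm ▸ Finset.mem_image_of_mem _ ha
      obtain ⟨b, hb, hbe⟩ := Finset.mem_image.mp hmem2
      have := outMap_lt_or hij b
      have := hAI a ha
      unfold innMap at hbe
      omega
    · obtain ⟨B, hB, hBe⟩ := Finset.mem_image.mp h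
      have : B = A := Finset.image_injective hinj2 hBe
      exact this ▸ hB

theorem decompose {n i j : ℕ} {π : Finset (Finset ℕ)}
    (hπ : IsNCPartition n π) (hf : (π.filter fun A => A.card = 1).card = 2)
    (hij : i < j) (hiπ : ({i} : Finset ℕ) ∈ π) (hjπ : ({j} : Finset ℕ) ∈ π)
    (hm : IsNCPartition n (mergeSingles π i j)) :
    1 ≤ i ∧ j ≤ n ∧
    ∃ π₁ π₂ : Finset (Finset ℕ), IsNCPartition (n + i - j - 1) π₁ ∧ (∀ A ∈ π₁, A.card ≠ 1) ∧
      IsNCPartition (j - i - 1) π₂ ∧ (∀ A ∈ π₂, A.card ≠ 1) ∧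
      build i j π₁ π₂ = π := by
  obtain ⟨⟨pne, pdj, pcov⟩, pnc⟩ := hπ
  obtain ⟨-, mnc⟩ := hm
  have hi : 1 ≤ i ∧ i ≤ n := by
    have := (pcov i).mpr ⟨{i}, hiπ, Finset.mem_singleton_self i⟩
    simpa [Finset.mem_Icc] using this
  have hj : 1 ≤ j ∧ j ≤ n := by
    have := (pcov j).mpr ⟨{j}, hjπ, Finset.mem_singleton_self j⟩
    simpa [Finset.mem_Icc] using this
  have filter_eq : π.filter (fun A => A.card = 1) = {({i} : Finset ℕ), {j}} := by
    refine (Finset.eq_of_subset_of_card_le ?_ ?_).symm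
    · intro A hA
      simp only [Finset.mem_insert, Finset.mem_singleton] at hA
      rcases hA with rfl | rfl
      · exact Finset.mem_filter.mpr ⟨hiπ, Finset.card_singleton i⟩
      · exact Finset.mem_filter.mpr ⟨hjπ, Finset.card_singleton j⟩
    · rw [hf, Finset.card_insert_of_notMem (by simp [Finset.singleton_inj]; omega)]
      simp
  have classify : ∀ A ∈ π, A = {i} ∨ A = {j} ∨
      (∀ x ∈ A, i < x ∧ x < j) ∨ (∀ x ∈ A, x < i ∨ j < x) := by
    intro A hA
    by_cases h1 : A = {i}
    · exact Or.inl h1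
    by_cases h2 : A = {j}
    · exact Or.inr (Or.inl h2)
    have hiA : i ∉ A := fun h =>
      (Finset.disjoint_left.mp (pdj {i} hiπ A hA fun e => h1 e.symm)
        (Finset.mem_singleton_self i)) h
    have hjA : j ∉ A := fun h =>
      (Finset.disjoint_left.mp (pdj {j} hjπ A hA fun e => h2 e.symm)
        (Finset.mem_singleton_self j)) h
    have hAm : A ∈ mergeSingles π i j :=
      Finset.mem_insert_of_mem (Finset.mem_erase.mpr ⟨h2, Finset.mem_erase.mpr ⟨h1, hA⟩⟩)
    have hijm : ({i, j} : Finset ℕ) ∈ mergeSingles π i j := Finset.mem_insert_self _ _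
    have hne : A ≠ {i, j} := fun e => hiA (e ▸ by simp)
    by_cases h3 : ∃ x ∈ A, i < x ∧ x < j
    · refine Or.inr (Or.inr (Or.inl ?_))
      intro x hx
      obtain ⟨c, hc, hci, hcj⟩ := h3
      by_contra hcon
      have hxi : x ≠ i := fun e => hiA (e ▸ hx)
      have hxj : x ≠ j := fun e => hjA (e ▸ hx)
      have hor : x < i ∨ j < x := by omega
      rcases hor with hor | hor
      · exact mnc ⟨A, hAm, {i, j}, hijm, hne, x, hx, c, hc, i, by simp, j, by simp,
          hor, hci, hcj⟩
      · exact mnc ⟨{i, j}, hijm, A, hAm, fun e => hne e.symm, i, by simp, j, by simp,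
          c, hc, x, hx, hci, hcj, hor⟩
    · refine Or.inr (Or.inr (Or.inr ?_))
      intro x hx
      push_neg at h3
      have := h3 x hx
      have hxi : x ≠ i := fun e => hiA (e ▸ hx)
      have hxj : x ≠ j := fun e => hjA (e ▸ hx)
      omega
  classical
  set πout := π.filter (fun A => ∀ x ∈ A, x < i ∨ j < x) with hπout
  set πin := π.filter (fun A => ∀ x ∈ A, i < x ∧ x < j) with hπin
  have covout : ∀ x, (x ∈ Finset.Icc 1 n ∧ (x < i ∨ j < x)) ↔ ∃ A ∈ πout, x ∈ A := by
    intro x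
    constructor
    · rintro ⟨hx, hor⟩
      obtain ⟨A, hA, hxA⟩ := (pcov x).mp hx
      rcases classify A hA with rfl | rfl | h | h
      · simp only [Finset.mem_singleton] at hxA; omega
      · simp only [Finset.mem_singleton] at hxA; omega
      · have := h x hxA; omega
      · exact ⟨A, Finset.mem_filter.mpr ⟨hA, h⟩, hxA⟩
    · rintro ⟨A, hA, hxA⟩
      obtain ⟨hAπ, hpred⟩ := Finset.mem_filter.mp hA
      exact ⟨(pcov x).mpr ⟨A, hAπ, hxA⟩, hpred x hxA⟩
  have covin : ∀ x, (x ∈ Finset.Icc 1 n ∧ (i < x ∧ x < j)) ↔ ∃ A ∈ πin, x ∈ A := by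
    intro x
    constructor
    · rintro ⟨hx, hor⟩
      obtain ⟨A, hA, hxA⟩ := (pcov x).mp hx
      rcases classify A hA with rfl | rfl | h | h
      · simp only [Finset.mem_singleton] at hxA; omega
      · simp only [Finset.mem_singleton] at hxA; omega
      · exact ⟨A, Finset.mem_filter.mpr ⟨hA, h⟩, hxA⟩
      · have := h x hxA; omega
    · rintro ⟨A, hA, hxA⟩
      obtain ⟨hAπ, hpred⟩ := Finset.mem_filter.mp hA
      exact ⟨(pcov x).mpr ⟨A, hAπ, hxA⟩, hpred x hxA⟩
  have ncout : ¬ Crossing πout := fun h => pnc (crossing_mono (Finset.filter_subset _ _) h)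
  have ncin : ¬ Crossing πin := fun h => pnc (crossing_mono (Finset.filter_subset _ _) h)
  have T1 := transport (P := fun x => x ∈ Finset.Icc 1 n ∧ (x < i ∨ j < x))
      (Q := fun y => y ∈ Finset.Icc 1 (n + i - j - 1)) (ψ := outInv i j)
      (fun A hA => pne A (Finset.filter_subset _ _ hA))
      (fun A hA B hB => pdj A (Finset.filter_subset _ _ hA) B (Finset.filter_subset _ _ hB))
      covout ncout
      (fun x₁ x₂ p1 p2 h => by
        have e1 := outMap_outInv hij p1.2
        have e2 := outMap_outInv hij p2.2
        rw [← e1, ← e2, h])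
      (fun x₁ x₂ p1 p2 h => by
        obtain ⟨-, q1⟩ := p1; obtain ⟨-, q2⟩ := p2
        unfold outInv; split_ifs <;> omega)
      (fun y hy => by
        simp only [Finset.mem_Icc] at hy
        refine ⟨outMap i j y, ⟨?_, ?_⟩, outInv_outMap i j y⟩
        · simp only [Finset.mem_Icc]; unfold outMap; split_ifs <;> omega
        · exact outMap_lt_or hij y)
      (fun x px => by
        obtain ⟨hx, hor⟩ := px
        simp only [Finset.mem_Icc] at hx ⊢
        unfold outInv; split_ifs <;> omega)
  have T2 := transport (P := fun x => x ∈ Finset.Icc 1 n ∧ (i < x ∧ x < j))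
      (Q := fun y => y ∈ Finset.Icc 1 (j - i - 1)) (ψ := innInv i)
      (fun A hA => pne A (Finset.filter_subset _ _ hA))
      (fun A hA B hB => pdj A (Finset.filter_subset _ _ hA) B (Finset.filter_subset _ _ hB))
      covin ncin
      (fun x₁ x₂ p1 p2 h => by
        obtain ⟨-, q1, -⟩ := p1; obtain ⟨-, q2, -⟩ := p2
        unfold innInv at h; omega)
      (fun x₁ x₂ p1 p2 h => by
        obtain ⟨-, q1, -⟩ := p1; obtain ⟨-, q2, -⟩ := p2
        unfold innInv; omega)
      (fun y hy => by
        simp only [Finset.mem_Icc] at hy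
        exact ⟨y + i, ⟨by simp only [Finset.mem_Icc]; omega, by omega, by omega⟩,
          by unfold innInv; omega⟩)
      (fun x px => by
        obtain ⟨hx, h1, h2⟩ := px
        simp only [Finset.mem_Icc] at hx ⊢
        unfold innInv; omega)
  obtain ⟨Ne1, Dj1, Cov1, Nc1, Card1⟩ := T1
  obtain ⟨Ne2, Dj2, Cov2, Nc2, Card2⟩ := T2
  refine ⟨hi.1, hj.2, πout.image (Finset.image (outInv i j)),
    πin.image (Finset.image (innInv i)), ⟨⟨Ne1, Dj1, Cov1⟩, Nc1⟩, ?_, ⟨⟨Ne2, Dj2, Cov2⟩, Nc2⟩,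
    ?_, ?_⟩
  · rintro A hA hc
    obtain ⟨B, hB, rfl⟩ := Finset.mem_image.mp hA
    have hB1 : B.card = 1 := by rw [← Card1 B hB]; exact hc
    have hBf : B ∈ π.filter (fun A => A.card = 1) :=
      Finset.mem_filter.mpr ⟨Finset.filter_subset _ _ hB, hB1⟩
    rw [filter_eq] at hBf
    simp only [Finset.mem_insert, Finset.mem_singleton] at hBf
    have hpred := (Finset.mem_filter.mp hB).2
    rcases hBf with rfl | rfl
    · have := hpred i (Finset.mem_singleton_self i); omega
    · have := hpred j (Finset.mem_singleton_self j); omega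
  · rintro A hA hc
    obtain ⟨B, hB, rfl⟩ := Finset.mem_image.mp hA
    have hB1 : B.card = 1 := by rw [← Card2 B hB]; exact hc
    have hBf : B ∈ π.filter (fun A => A.card = 1) :=
      Finset.mem_filter.mpr ⟨Finset.filter_subset _ _ hB, hB1⟩
    rw [filter_eq] at hBf
    simp only [Finset.mem_insert, Finset.mem_singleton] at hBf
    have hpred := (Finset.mem_filter.mp hB).2
    rcases hBf with rfl | rfl
    · have := hpred i (Finset.mem_singleton_self i); omega
    · have := hpred j (Finset.mem_singleton_self j); omega
  · ext A
    constructor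
    · intro hA
      rcases build_mem.mp hA with rfl | rfl | h | h
      · exact hiπ
      · exact hjπ
      · obtain ⟨C, hC, rfl⟩ := Finset.mem_image.mp h
        obtain ⟨B, hB, rfl⟩ := Finset.mem_image.mp hC
        have hpred := (Finset.mem_filter.mp hB).2
        have : (B.image (outInv i j)).image (outMap i j) = B := by
          rw [Finset.image_image]
          exact image_fix fun x hx => outMap_outInv hij (hpred x hx)
        rw [this]
        exact Finset.filter_subset _ _ hB
      · obtain ⟨C, hC, rfl⟩ := Finset.mem_image.mp h
        obtain ⟨B, hB, rfl⟩ := Finset.mem_image.mp hC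
        have hpred := (Finset.mem_filter.mp hB).2
        have : (B.image (innInv i)).image (innMap i) = B := by
          rw [Finset.image_image]
          refine image_fix fun x hx => ?_
          have := hpred x hx
          simp only [Function.comp_apply, innMap, innInv]; omega
        rw [this]
        exact Finset.filter_subset _ _ hB
    · intro hA
      rcases classify A hA with rfl | rfl | h | h
      · exact build_mem.mpr (Or.inl rfl)
      · exact build_mem.mpr (Or.inr (Or.inl rfl))
      · refine build_mem.mpr (Or.inr (Or.inr (Or.inr ?_)))
        refine Finset.mem_image.mpr ⟨A.image (innInv i),
          Finset.mem_image_of_mem _ (Finset.mem_filter.mpr ⟨hA, h⟩), ?_⟩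
        rw [Finset.image_image]
        refine image_fix fun x hx => ?_
        have := h x hx
        simp only [Function.comp_apply, innMap, innInv]; omega
      · refine build_mem.mpr (Or.inr (Or.inr (Or.inl ?_)))
        refine Finset.mem_image.mpr ⟨A.image (outInv i j),
          Finset.mem_image_of_mem _ (Finset.mem_filter.mpr ⟨hA, h⟩), ?_⟩
        rw [Finset.image_image]
        exact image_fix fun x hx => outMap_outInv hij (h x hx)

theorem right_mem {n i j : ℕ} {π₁ π₂ : Finset (Finset ℕ)} (hi : 1 ≤ i) (hij : i < j)
    (hj : j ≤ n)
    (H1 : IsNCPartition (n + i - j - 1) π₁) (hs1 : ∀ A ∈ π₁, A.card ≠ 1)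
    (H2 : IsNCPartition (j - i - 1) π₂) (hs2 : ∀ A ∈ π₂, A.card ≠ 1) :
    IsNCPartition n (build i j π₁ π₂) ∧
    ((build i j π₁ π₂).filter fun A => A.card = 1).card = 2 ∧
    ∃ i' j' : ℕ, i' < j' ∧ ({i'} : Finset ℕ) ∈ build i j π₁ π₂ ∧
      ({j'} : Finset ℕ) ∈ build i j π₁ π₂ ∧
      IsNCPartition n (mergeSingles (build i j π₁ π₂) i' j') := by
  obtain ⟨h1, h2, h3⟩ := build_left hi hij hj H1 hs1 H2 hs2
  refine ⟨h1, ?_, i, j, hij, build_mem.mpr (Or.inl rfl), build_mem.mpr (Or.inr (Or.inl rfl)),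
    h3⟩
  rw [h2, Finset.card_insert_of_notMem (by simp [Finset.singleton_inj]; omega)]
  simp

end S15

theorem stmt15 (n : ℕ) :
    Nonempty
      ({π : Finset (Finset ℕ) // IsNCPartition n π ∧
          (π.filter fun A => A.card = 1).card = 2 ∧
          ∃ i j : ℕ, i < j ∧ ({i} : Finset ℕ) ∈ π ∧ ({j} : Finset ℕ) ∈ π ∧
            IsNCPartition n (mergeSingles π i j)} ≃
        {t : (ℕ × ℕ) × Finset (Finset ℕ) × Finset (Finset ℕ) //
          1 ≤ t.1.1 ∧ t.1.1 < t.1.2 ∧ t.1.2 ≤ n ∧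
          IsNCPartition (n + t.1.1 - t.1.2 - 1) t.2.1 ∧ (∀ A ∈ t.2.1, A.card ≠ 1) ∧
          IsNCPartition (t.1.2 - t.1.1 - 1) t.2.2 ∧ (∀ A ∈ t.2.2, A.card ≠ 1)}) := by
  refine ⟨(Equiv.ofBijective
    (fun t => ⟨S15.build t.1.1.1 t.1.1.2 t.1.2.1 t.1.2.2,
      S15.right_mem t.2.1 t.2.2.1 t.2.2.2.1 t.2.2.2.2.1 t.2.2.2.2.2.1 t.2.2.2.2.2.2.1
        t.2.2.2.2.2.2.2⟩) ⟨?_, ?_⟩).symm⟩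
  · intro t t' h
    obtain ⟨⟨⟨i, j⟩, π₁, π₂⟩, hi, hij, hj, H1, hs1, H2, hs2⟩ := t
    obtain ⟨⟨⟨i', j'⟩, π₁', π₂'⟩, hi', hij', hj', H1', hs1', H2', hs2'⟩ := t'
    have heq : S15.build i j π₁ π₂ = S15.build i' j' π₁' π₂' := congrArg Subtype.val h
    have f1 := (S15.build_left hi hij hj H1 hs1 H2 hs2).2.1
    have f2 := (S15.build_left hi' hij' hj' H1' hs1' H2' hs2').2.1
    have hpair : ({({i} : Finset ℕ), {j}} : Finset (Finset ℕ)) = {({i'} : Finset ℕ), {j'}} := by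
      rw [← f1, ← f2, heq]
    obtain ⟨rfl, rfl⟩ := S15.pair_eq hij hij' hpair
    have sub1 := S15.build_sub hij H1.1.1 hs1 H2.1.1 hs2 H2.1.2.2 H2'.1.2.2 heq
    have sub2 := S15.build_sub hij H1'.1.1 hs1' H2'.1.1 hs2' H2'.1.2.2 H2.1.2.2 heq.symm
    have e1 : π₁ = π₁' := Finset.Subset.antisymm sub1.1 sub2.1
    have e2 : π₂ = π₂' := Finset.Subset.antisymm sub1.2 sub2.2
    subst e1; subst e2
    rfl
  · rintro ⟨π, hNC, hf2, i, j, hij, hiπ, hjπ, hm⟩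
    obtain ⟨hi1, hjn, π₁, π₂, H1, hs1, H2, hs2, hbe⟩ := S15.decompose hNC hf2 hij hiπ hjπ hm
    exact ⟨⟨⟨⟨i, j⟩, π₁, π₂⟩, hi1, hij, hjn, H1, hs1, H2, hs2⟩, Subtype.ext hbe⟩
end
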